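/- arXiv:1202.0258 — 6 statements merged into one kernel-verified Lean document; each statement's English description precedes it below -/
import Mathlib

section
/- If the hazard rate of F_c is finite and non-decreasing, then U_c is slowly varying at infinity: for every κ > 0, lim_{t→∞} U_c(κt)/U_c(t) = 1. -/
open MeasureTheory Real

set_option maxHeartbeats 1600000

/-- If the hazard rate `f_c / F̄_c` is finite and non-decreasing, then
`U_c` is slowly varying at infinity: for every `κ > 0`,
`U_c(κ t) / U_c(t) → 1` as `t → ∞`. -/
theorem stmt3 (Fbar fc Uc : ℝ → ℝ)
    (hFbar_pos : ∀ x, 0 < Fbar x)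
    (hFbar_le : ∀ x, Fbar x ≤ 1)
    (hFbar_anti : StrictAnti Fbar)
    (hFbar_tendsto : Filter.Tendsto Fbar Filter.atTop (nhds 0))
    (hderiv : ∀ x, HasDerivAt Fbar (-(fc x)) x)
    (hhaz : Monotone fun x => fc x / Fbar x)
    (hUc : ∀ t, Uc t = sInf {x : ℝ | 1 / Fbar x ≥ t}) :
    ∀ κ > (0 : ℝ),
      Filter.Tendsto (fun t => Uc (κ * t) / Uc t) Filter.atTop (nhds 1) := by
  have hFcont : Continuous Fbar :=
    continuous_iff_continuousAt.mpr fun x => (hderiv x).continuousAt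
  -- membership characterization
  have hmem : ∀ t : ℝ, 0 < t → ∀ x : ℝ, (1 / Fbar x ≥ t ↔ Fbar x ≤ 1 / t) := by
    intro t ht x
    rw [ge_iff_le, le_div_iff₀ (hFbar_pos x), le_div_iff₀ ht, mul_comm]
  -- nonemptiness
  have hne : ∀ t : ℝ, 0 < t → {x : ℝ | 1 / Fbar x ≥ t}.Nonempty := by
    intro t ht
    have : ∀ᶠ x in Filter.atTop, Fbar x < 1 / t :=
      hFbar_tendsto.eventually_lt_const (by positivity)
    obtain ⟨x, hx⟩ := this.exists
    exact ⟨x, (hmem t ht x).mpr hx.le⟩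
  -- all elements of the set are > M when 1/Fbar M < t
  have hgt : ∀ M t : ℝ, 1 / Fbar M < t → ∀ x ∈ {x : ℝ | 1 / Fbar x ≥ t}, M < x := by
    intro M t hMt x hx
    have ht : 0 < t := lt_trans (one_div_pos.mpr (hFbar_pos _)) hMt
    have h1 : Fbar x ≤ 1 / t := (hmem t ht x).mp hx
    have h2 : 1 / t < Fbar M := by
      rw [div_lt_iff₀ ht]
      have := (div_lt_iff₀ (hFbar_pos M)).mp hMt
      linarith
    by_contra hcon
    push_neg at hcon
    have := hFbar_anti.antitone hcon
    linarith
  have hbdd : ∀ t : ℝ, 1 / Fbar 0 < t → BddBelow {x : ℝ | 1 / Fbar x ≥ t} := by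
    intro t h0t
    exact ⟨0, fun x hx => (hgt 0 t h0t x hx).le⟩
  have hUge : ∀ M t : ℝ, 1 / Fbar M < t → M ≤ Uc t := by
    intro M t hMt
    rw [hUc]
    have ht : 0 < t := lt_trans (one_div_pos.mpr (hFbar_pos _)) hMt
    exact le_csInf (hne t ht) fun x hx => (hgt M t hMt x hx).le
  -- Uc t → ∞
  have hUtop : Filter.Tendsto Uc Filter.atTop Filter.atTop := by
    rw [Filter.tendsto_atTop]
    intro M
    filter_upwards [Filter.eventually_gt_atTop (1 / Fbar M)] with t ht
    exact hUge M t ht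
  -- Uc t belongs to the set (the set is closed)
  have hUmem : ∀ t : ℝ, 1 / Fbar 0 < t → Fbar (Uc t) ≤ 1 / t := by
    intro t h0t
    have ht : 0 < t := lt_trans (one_div_pos.mpr (hFbar_pos _)) h0t
    have hset : {x : ℝ | 1 / Fbar x ≥ t} = {x : ℝ | Fbar x ≤ 1 / t} :=
      Set.ext fun x => hmem t ht x
    have hclosed : IsClosed {x : ℝ | Fbar x ≤ 1 / t} :=
      isClosed_le hFcont continuous_const
    have := hclosed.csInf_mem (hset ▸ hne t ht) (hset ▸ hbdd t h0t)
    rw [hUc, hset]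
    exact this
  -- find a point where the hazard rate is positive
  have hx0 : ∃ x₀ : ℝ, 0 < fc x₀ / Fbar x₀ := by
    by_contra hcon
    push_neg at hcon
    have hfc : ∀ x, fc x ≤ 0 := by
      intro x
      have := hcon x
      by_contra hfx
      push_neg at hfx
      have : 0 < fc x / Fbar x := div_pos hfx (hFbar_pos x)
      linarith [hcon x]
    have hmono : Monotone Fbar := by
      apply monotone_of_deriv_nonneg
      · exact fun x => (hderiv x).differentiableAt
      · intro x
        rw [(hderiv x).deriv]
        linarith [hfc x]
    have h01 : Fbar 1 < Fbar 0 := hFbar_anti (by norm_num)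
    have := hmono (show (0:ℝ) ≤ 1 by norm_num)
    linarith
  obtain ⟨x₀, hc⟩ := hx0
  set c := fc x₀ / Fbar x₀ with hcdef
  have hcb : ∀ x, x₀ ≤ x → c * Fbar x ≤ fc x := by
    intro x hx
    have := hhaz hx
    simp only at this
    calc c * Fbar x ≤ (fc x / Fbar x) * Fbar x := by
          apply mul_le_mul_of_nonneg_right this (hFbar_pos x).le
      _ = fc x := div_mul_cancel₀ _ (hFbar_pos x).ne'
  -- the function Fbar s * exp (c s) is antitone on [x₀, ∞)
  have hexp : ∀ s : ℝ, HasDerivAt (fun s => Real.exp (c * s)) (Real.exp (c * s) * c) s :=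
    fun s => by simpa using ((hasDerivAt_id s).const_mul c).exp
  have hg : AntitoneOn (fun s => Fbar s * Real.exp (c * s)) (Set.Ici x₀) := by
    apply antitoneOn_of_hasDerivWithinAt_nonpos (convex_Ici x₀)
      (Continuous.continuousOn (by continuity))
      (f' := fun s => -(fc s) * Real.exp (c * s) + Fbar s * (Real.exp (c * s) * c))
    · intro s hs
      exact ((hderiv s).mul (hexp s)).hasDerivWithinAt
    · intro s hs
      rw [interior_Ici] at hs
      have hb := hcb s (le_of_lt hs)
      have he : (0:ℝ) < Real.exp (c * s) := Real.exp_pos _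
      nlinarith
  -- key estimate for κ' ≥ 1
  have key : ∀ κ' : ℝ, 1 ≤ κ' → ∀ᶠ t in Filter.atTop,
      Uc t ≤ Uc (κ' * t) ∧ Uc (κ' * t) ≤ Uc t + Real.log κ' / c := by
    intro κ' hκ'
    have hκ'0 : (0:ℝ) < κ' := lt_of_lt_of_le one_pos hκ'
    filter_upwards [Filter.eventually_gt_atTop (1 / Fbar 0),
      Filter.eventually_gt_atTop (1 / Fbar x₀),
      Filter.eventually_gt_atTop (0:ℝ)] with t h0t hx0t ht
    have htκ : t ≤ κ' * t := le_mul_of_one_le_left ht.le hκ'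
    have h0κt : 1 / Fbar 0 < κ' * t := lt_of_lt_of_le h0t htκ
    constructor
    · rw [hUc t, hUc (κ' * t)]
      apply csInf_le_csInf (hbdd t h0t) (hne (κ' * t) (by positivity))
      intro x hx
      exact le_trans htκ hx
    · set D := Real.log κ' / c with hD
      have hD0 : 0 ≤ D := div_nonneg (Real.log_nonneg hκ') hc.le
      have hUt : x₀ ≤ Uc t := hUge x₀ t hx0t
      have hFUt : Fbar (Uc t) ≤ 1 / t := hUmem t h0t
      -- exponential bound
      have hanti := hg (Set.mem_Ici.mpr hUt) (Set.mem_Ici.mpr (by linarith : x₀ ≤ Uc t + D))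
        (by linarith : Uc t ≤ Uc t + D)
      simp only at hanti
      have hcD : c * D = Real.log κ' := by
        rw [hD]; field_simp
      have hexpand : Real.exp (c * (Uc t + D)) = Real.exp (c * Uc t) * κ' := by
        rw [mul_add, Real.exp_add, hcD, Real.exp_log hκ'0]
      rw [hexpand] at hanti
      have heA : (0:ℝ) < Real.exp (c * Uc t) := Real.exp_pos _
      have hF1 : Fbar (Uc t + D) * κ' ≤ Fbar (Uc t) := by
        nlinarith
      have hF2 : Fbar (Uc t + D) ≤ 1 / (κ' * t) := by
        rw [le_div_iff₀ ht] at hFUt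
        rw [le_div_iff₀ (by positivity : (0:ℝ) < κ' * t)]
        nlinarith [mul_le_mul_of_nonneg_right hF1 ht.le]
      have hmem' : Uc t + D ∈ {x : ℝ | 1 / Fbar x ≥ κ' * t} :=
        (hmem (κ' * t) (by positivity : (0:ℝ) < κ' * t) _).mpr hF2
      rw [hUc (κ' * t)]
      exact csInf_le (hbdd (κ' * t) h0κt) hmem'
  intro κ hκ
  -- bound |Uc (κ t) - Uc t| ≤ |log κ| / c eventually
  have habs : ∀ᶠ t in Filter.atTop, |Uc (κ * t) - Uc t| ≤ |Real.log κ| / c := by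
    rcases le_or_gt 1 κ with hκ1 | hκ1
    · filter_upwards [key κ hκ1] with t ⟨h1, h2⟩
      rw [abs_of_nonneg (Real.log_nonneg hκ1), abs_le]
      constructor
      · have : 0 ≤ Real.log κ / c := div_nonneg (Real.log_nonneg hκ1) hc.le
        linarith
      · linarith
    · have hκ' : 1 ≤ 1 / κ := (le_div_iff₀ hκ).mpr (by linarith)
      have htend : Filter.Tendsto (fun t => κ * t) Filter.atTop Filter.atTop :=
        Filter.Tendsto.const_mul_atTop hκ Filter.tendsto_id
      filter_upwards [htend.eventually (key (1/κ) hκ')] with t ⟨h1, h2⟩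
      have heq : 1 / κ * (κ * t) = t := by field_simp
      rw [heq] at h1 h2
      have hlog : Real.log (1/κ) = -Real.log κ := by
        rw [one_div, Real.log_inv]
      have habs' : |Real.log κ| = -Real.log κ :=
        abs_of_neg (Real.log_neg hκ hκ1)
      rw [hlog] at h2
      have hA0 : 0 ≤ -Real.log κ / c :=
        div_nonneg (by linarith [Real.log_neg hκ hκ1]) hc.le
      rw [habs', abs_le]
      exact ⟨by linarith, by linarith⟩
  -- final squeeze
  set C := |Real.log κ| / c with hCdef
  have hC0 : 0 ≤ C := div_nonneg (abs_nonneg _) hc.le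
  have hCz : Filter.Tendsto (fun t => C / Uc t) Filter.atTop (nhds 0) :=
    Filter.Tendsto.div_atTop tendsto_const_nhds hUtop
  have hone : Filter.Tendsto (fun _ : ℝ => (1:ℝ)) Filter.atTop (nhds 1) := tendsto_const_nhds
  have hlow : Filter.Tendsto (fun t => 1 - C / Uc t) Filter.atTop (nhds 1) := by
    have := hone.sub hCz
    rw [sub_zero] at this
    exact this
  have hhigh : Filter.Tendsto (fun t => 1 + C / Uc t) Filter.atTop (nhds 1) := by
    have := hone.add hCz
    rw [add_zero] at this
    exact this
  apply tendsto_of_tendsto_of_tendsto_of_le_of_le' hlow hhigh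
  · filter_upwards [habs, hUtop.eventually_ge_atTop 1] with t hab hU1
    have hU0 : (0:ℝ) < Uc t := lt_of_lt_of_le one_pos hU1
    have h1 : Uc t - C ≤ Uc (κ * t) := by
      have := (abs_le.mp hab).1
      linarith
    have hcc : C / Uc t * Uc t = C := div_mul_cancel₀ _ hU0.ne'
    rw [le_div_iff₀ hU0]
    nlinarith
  · filter_upwards [habs, hUtop.eventually_ge_atTop 1] with t hab hU1
    have hU0 : (0:ℝ) < Uc t := lt_of_lt_of_le one_pos hU1
    have h1 : Uc (κ * t) ≤ Uc t + C := by
      have := (abs_le.mp hab).2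
      linarith
    have hcc : C / Uc t * Uc t = C := div_mul_cancel₀ _ hU0.ne'
    rw [div_le_iff₀ hU0]
    nlinarith
end

section
/- If the hazard rate of F_c is finite and non-decreasing, then lim_{t→∞} (U_c(t) ln U_c(t)) / (∫_1^t U_c(x)/x dx) = 0. -/
open MeasureTheory Real Filter Set
set_option maxHeartbeats 1000000

/-- If the hazard rate `f_c / F̄_c` is finite and non-decreasing, then
`U_c(t) ln U_c(t) / ∫_1^t U_c(x)/x dx → 0` as `t → ∞`. -/
theorem stmt4 (Fbar fc Uc : ℝ → ℝ)
    (hFbar_pos : ∀ x, 0 < Fbar x)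
    (hFbar_le : ∀ x, Fbar x ≤ 1)
    (hFbar_anti : StrictAnti Fbar)
    (hFbar_tendsto : Filter.Tendsto Fbar Filter.atTop (nhds 0))
    (hderiv : ∀ x, HasDerivAt Fbar (-(fc x)) x)
    (hhaz : Monotone fun x => fc x / Fbar x)
    (hUc : ∀ t, Uc t = sInf {x : ℝ | 1 / Fbar x ≥ t}) :
    Filter.Tendsto
      (fun t => Uc t * Real.log (Uc t) / ∫ x in (1 : ℝ)..t, Uc x / x)
      Filter.atTop (nhds 0) := by
  set q : ℝ → ℝ := fun x => fc x / Fbar x with hqdef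
  set G : ℝ → ℝ := fun x => -Real.log (Fbar x) with hGdef
  have hGd : ∀ x, HasDerivAt G (q x) x := by
    intro x
    have h1 := ((hderiv x).log (hFbar_pos x).ne').neg
    simpa [hGdef, hqdef, neg_div, Pi.neg_def] using h1
  have hGc : Continuous G := continuous_iff_continuousAt.mpr fun x => (hGd x).continuousAt
  have hGmono : StrictMono G := by
    intro a b hab
    have h2 : Fbar b < Fbar a := hFbar_anti hab
    have h3 := Real.log_lt_log (hFbar_pos b) h2
    simp only [hGdef]
    linarith
  have hGnonneg : ∀ x, 0 ≤ G x := by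
    intro x
    have h4 := Real.log_nonpos (le_of_lt (hFbar_pos x)) (hFbar_le x)
    simp only [hGdef]; linarith
  obtain ⟨x0, hx0⟩ : ∃ x0, 0 < q x0 := by
    by_contra h
    push_neg at h
    have hfc : ∀ x, 0 ≤ deriv Fbar x := by
      intro x
      rw [(hderiv x).deriv]
      have h3 := h x
      have h4 := hFbar_pos x
      have h5 : fc x ≤ 0 := by
        by_contra h5
        push_neg at h5
        exact absurd (div_pos h5 h4) (not_lt.mpr h3)
      linarith
    have hmono : Monotone Fbar :=
      monotone_of_deriv_nonneg (fun x => (hderiv x).differentiableAt) hfc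
    have h6 := hFbar_anti (zero_lt_one (α := ℝ))
    have h7 := hmono (le_of_lt (zero_lt_one (α := ℝ)))
    linarith
  set x1 : ℝ := max x0 1 with hx1def
  have hx1ge1 : (1:ℝ) ≤ x1 := le_max_right _ _
  set c : ℝ := q x1 with hcdef
  have hc : 0 < c := lt_of_lt_of_le hx0 (hhaz (le_max_left _ _))
  set α : ℝ := G x1 with hadef
  have hα0 : 0 ≤ α := hGnonneg x1
  -- linear lower bound on G
  have hGlin : ∀ x, x1 ≤ x → α + c * (x - x1) ≤ G x := by
    intro x hx
    have hmono : MonotoneOn (fun y => G y - c * y) (Set.Ici x1) := by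
      apply monotoneOn_of_deriv_nonneg (convex_Ici x1)
      · exact (hGc.sub (continuous_const.mul continuous_id)).continuousOn
      · intro y hy
        exact ((hGd y).sub ((hasDerivAt_id y).const_mul c)).differentiableAt.differentiableWithinAt
      · intro y hy
        rw [interior_Ici] at hy
        have : deriv (fun y => G y - c * y) y = q y - c := by
          have := ((hGd y).sub ((hasDerivAt_id y).const_mul c)).deriv
          simp only [mul_one] at this; exact this
        rw [this]
        have := hhaz (le_of_lt hy)
        simp only [hqdef] at *
        linarith [hhaz (le_of_lt hy : x1 ≤ y)]
    have := hmono (Set.self_mem_Ici) (by exact hx) hx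
    simp only at this
    nlinarith
  -- convexity of G
  have hGconv : ConvexOn ℝ Set.univ G := by
    apply Monotone.convexOn_univ_of_deriv (fun x => (hGd x).differentiableAt)
    have : deriv G = q := funext fun x => (hGd x).deriv
    rw [this]
    exact hhaz
  -- G tends to infinity
  have hGtop : Tendsto G atTop atTop := by
    have h1 : Tendsto Fbar atTop (nhdsWithin 0 (Set.Ioi 0)) := by
      apply tendsto_nhdsWithin_of_tendsto_nhds_of_eventually_within _ hFbar_tendsto
      exact Eventually.of_forall fun x => hFbar_pos x
    have h2 : Tendsto (fun x => Real.log (Fbar x)) atTop atBot :=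
      Real.tendsto_log_nhdsGT_zero.comp h1
    exact tendsto_neg_atBot_atTop.comp h2
  -- characterization of Uc
  have hchar : ∀ t : ℝ, 1 < t → α < Real.log t → G (Uc t) = Real.log t ∧ x1 < Uc t := by
    intro t ht1 ht
    have ht0 : (0:ℝ) < t := lt_trans zero_lt_one ht1
    have hSeq : {x : ℝ | 1 / Fbar x ≥ t} = {x : ℝ | Real.log t ≤ G x} := by
      ext x
      simp only [Set.mem_setOf_eq, ge_iff_le]
      have h1 : (t ≤ 1 / Fbar x) ↔ (Fbar x ≤ 1 / t) := by
        rw [le_div_iff₀ (hFbar_pos x), le_div_iff₀ ht0, mul_comm]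
      rw [h1, ← Real.log_le_log_iff (hFbar_pos x) (by positivity),
        Real.log_div one_ne_zero (ne_of_gt ht0), Real.log_one]
      simp only [hGdef]
      constructor <;> intro <;> linarith
    obtain ⟨M, hM⟩ : ∃ M, Real.log t ≤ G M := (hGtop.eventually_ge_atTop (Real.log t)).exists
    have hx1M : x1 < M := hGmono.lt_iff_lt.mp (lt_of_lt_of_le ht hM)
    obtain ⟨a, haI, haG⟩ := intermediate_value_Icc (le_of_lt hx1M) hGc.continuousOn
      (Set.mem_Icc.mpr ⟨le_of_lt ht, hM⟩)
    have hset : {x : ℝ | 1 / Fbar x ≥ t} = Set.Ici a := by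
      rw [hSeq]; ext x
      simp only [Set.mem_setOf_eq, Set.mem_Ici, ← haG, hGmono.le_iff_le]
    have hUca : Uc t = a := by rw [hUc t, hset, csInf_Ici]
    refine ⟨by rw [hUca, haG], ?_⟩
    rw [hUca]
    exact hGmono.lt_iff_lt.mp (by rw [haG]; exact ht)
  -- monotonicity of Uc in the good region
  have hUcmono : ∀ s t : ℝ, 1 < s → α < Real.log s → s ≤ t → Uc s ≤ Uc t := by
    intro s t hs1 hsα hst
    have hs0 : (0:ℝ) < s := lt_trans zero_lt_one hs1
    have hlog : Real.log s ≤ Real.log t := Real.log_le_log hs0 hst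
    have h1 := hchar s hs1 hsα
    have h2 := hchar t (lt_of_lt_of_le hs1 hst) (lt_of_lt_of_le hsα hlog)
    exact hGmono.le_iff_le.mp (by rw [h1.1, h2.1]; exact hlog)
  -- upper bound on Uc
  have hUcub : ∀ t : ℝ, 1 < t → α < Real.log t → Uc t ≤ x1 + (Real.log t - α) / c := by
    intro t ht1 htα
    obtain ⟨hG1, hx1lt⟩ := hchar t ht1 htα
    have := hGlin (Uc t) (le_of_lt hx1lt)
    rw [hG1] at this
    rw [← sub_le_iff_le_add', le_div_iff₀ hc]
    nlinarith
  set α1 : ℝ := α + 1 with ha1def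
  set T0 : ℝ := Real.exp α1 with hT0def
  have hlogT0 : Real.log T0 = α1 := Real.log_exp _
  have hT0gt1 : (1:ℝ) < T0 := by
    rw [hT0def]
    calc (1:ℝ) = Real.exp 0 := (Real.exp_zero).symm
    _ < Real.exp α1 := Real.exp_lt_exp.mpr (by simp only [ha1def]; linarith)
  have hT0pos : (0:ℝ) < T0 := lt_trans zero_lt_one hT0gt1
  have hUcT0 : G (Uc T0) = α1 ∧ x1 < Uc T0 := by
    have := hchar T0 hT0gt1 (by rw [hlogT0]; simp only [ha1def]; linarith)
    rwa [hlogT0] at this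
  -- pointwise concavity bound
  have hconc : ∀ t : ℝ, α1 + 1 ≤ Real.log t → T0 ≤ t →
      ∀ x ∈ Set.Icc T0 t, (Real.log x - α1) / (Real.log t - α1) * Uc t ≤ Uc x := by
    intro t hlt hT0t x hx
    obtain ⟨hxT0, hxt⟩ := hx
    have hx0 : (0:ℝ) < x := lt_of_lt_of_le hT0pos hxT0
    have hlogx1 : α1 ≤ Real.log x := by rw [← hlogT0]; exact Real.log_le_log hT0pos hxT0
    have hlogx2 : Real.log x ≤ Real.log t := Real.log_le_log hx0 hxt
    have hD : (0:ℝ) < Real.log t - α1 := by linarith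
    set lam : ℝ := (Real.log t - Real.log x) / (Real.log t - α1) with hlam
    set mu : ℝ := (Real.log x - α1) / (Real.log t - α1) with hmu
    have hlamnn : 0 ≤ lam := div_nonneg (by linarith) (le_of_lt hD)
    have hmunn : 0 ≤ mu := div_nonneg (by linarith) (le_of_lt hD)
    have hsum : lam + mu = 1 := by
      rw [hlam, hmu, ← add_div]
      field_simp
      ring
    have hxGUc : G (Uc x) = Real.log x ∧ x1 < Uc x :=
      hchar x (lt_of_lt_of_le hT0gt1 hxT0) (by simp only [ha1def] at hlogx1 ⊢; linarith)
    have htGUc : G (Uc t) = Real.log t ∧ x1 < Uc t :=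
      hchar t (lt_of_lt_of_le hT0gt1 hT0t) (by simp only [ha1def] at hlt ⊢; linarith)
    have hcx := hGconv.2 (Set.mem_univ (Uc T0)) (Set.mem_univ (Uc t)) hlamnn hmunn hsum
    simp only [smul_eq_mul] at hcx
    have heq : lam * G (Uc T0) + mu * G (Uc t) = Real.log x := by
      rw [hUcT0.1, htGUc.1, hlam, hmu]
      field_simp
      ring
    rw [heq, ← hxGUc.1] at hcx
    have hle : lam * Uc T0 + mu * Uc t ≤ Uc x := hGmono.le_iff_le.mp hcx
    have hT0nn : 0 ≤ Uc T0 := le_trans (by linarith) (le_of_lt hUcT0.2)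
    nlinarith
  -- integrability of Uc x / x on [T0, t]
  have hIntUc : ∀ t : ℝ, T0 ≤ t → IntervalIntegrable (fun x => Uc x / x) volume T0 t := by
    intro t hT0t
    have hmonoUc : MonotoneOn Uc (Set.uIcc T0 t) := by
      rw [Set.uIcc_of_le hT0t]
      intro x hx y hy hxy
      refine hUcmono x y (lt_of_lt_of_le hT0gt1 hx.1) ?_ hxy
      have : α1 ≤ Real.log x := by rw [← hlogT0]; exact Real.log_le_log hT0pos hx.1
      simp only [ha1def] at this; linarith
    have h1 : IntervalIntegrable Uc volume T0 t := hmonoUc.intervalIntegrable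
    have h2 : ContinuousOn (fun x : ℝ => x⁻¹) (Set.uIcc T0 t) := by
      apply ContinuousOn.inv₀ continuousOn_id
      intro x hx
      rw [Set.uIcc_of_le hT0t] at hx
      exact ne_of_gt (lt_of_lt_of_le hT0pos hx.1)
    have := h1.mul_continuousOn h2
    simpa [div_eq_mul_inv] using this
  -- lower bound on the integral over [T0, t]
  have hEbound : ∀ t : ℝ, α1 + 1 ≤ Real.log t → T0 ≤ t →
      Uc t * (Real.log t - α1) / 2 ≤ ∫ x in T0..t, Uc x / x := by
    intro t hlt hT0t
    have hD : (0:ℝ) < Real.log t - α1 := by linarith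
    have hcont : ContinuousOn (fun x : ℝ => (Real.log x - α1) / x) (Set.uIcc T0 t) := by
      apply ContinuousOn.div
      · exact (Real.continuousOn_log.mono (by
          intro x hx
          rw [Set.uIcc_of_le hT0t] at hx
          exact ne_of_gt (lt_of_lt_of_le hT0pos hx.1))).sub continuousOn_const
      · exact continuousOn_id
      · intro x hx
        rw [Set.uIcc_of_le hT0t] at hx
        exact ne_of_gt (lt_of_lt_of_le hT0pos hx.1)
    have hI0 : (∫ x in T0..t, (Real.log x - α1) / x) = (Real.log t - α1)^2 / 2 := by
      have key : ∀ x ∈ Set.uIcc T0 t,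
          HasDerivAt (fun y => (Real.log y - α1)^2 / 2) ((Real.log x - α1) / x) x := by
        intro x hx
        rw [Set.uIcc_of_le hT0t] at hx
        have hx0 : (0:ℝ) < x := lt_of_lt_of_le hT0pos hx.1
        have h := (((Real.hasDerivAt_log (ne_of_gt hx0)).sub_const α1).pow 2).div_const 2
        simp only [Pi.pow_apply] at h
        refine h.congr_deriv ?_
        norm_num
        ring
      rw [intervalIntegral.integral_eq_sub_of_hasDerivAt key (hcont.intervalIntegrable)]
      rw [hlogT0]
      ring
    have hle : ∀ x ∈ Set.Icc T0 t,
        Uc t / (Real.log t - α1) * ((Real.log x - α1) / x) ≤ Uc x / x := by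
      intro x hx
      have hx0 : (0:ℝ) < x := lt_of_lt_of_le hT0pos hx.1
      have h1 := hconc t hlt hT0t x hx
      have heq : Uc t / (Real.log t - α1) * ((Real.log x - α1) / x)
          = ((Real.log x - α1) / (Real.log t - α1) * Uc t) / x := by
        field_simp
      rw [heq]
      exact div_le_div_of_nonneg_right h1 hx0.le
    have hIntPhi : IntervalIntegrable
        (fun x => Uc t / (Real.log t - α1) * ((Real.log x - α1) / x)) volume T0 t :=
      (continuousOn_const.mul hcont).intervalIntegrable
    have hmono := intervalIntegral.integral_mono_on hT0t hIntPhi (hIntUc t hT0t) hle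
    rw [intervalIntegral.integral_const_mul, hI0] at hmono
    calc Uc t * (Real.log t - α1) / 2
        = Uc t / (Real.log t - α1) * ((Real.log t - α1)^2 / 2) := by
          field_simp
      _ ≤ ∫ x in T0..t, Uc x / x := hmono
  -- final assembly
  clear_value q G x1 c α α1 T0
  by_cases hI : IntervalIntegrable (fun x => Uc x / x) volume 1 T0
  · set C : ℝ := ∫ x in (1:ℝ)..T0, Uc x / x with hCdef
    set K : ℝ := x1 + 1/c + |α|/c with hKdef
    have hK1 : (1:ℝ) ≤ K := by
      have : 0 ≤ 1/c := by positivity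
      have : 0 ≤ |α|/c := by positivity
      simp only [hKdef]; linarith
    clear_value K
    clear_value C
    set B : ℝ := max (α1 + 1) (max (2*α1) (max 1 (α1 + 8*|C| + 1))) with hBdef
    clear_value B
    have hbig : ∀ᶠ t : ℝ in atTop, T0 ≤ t ∧ B ≤ Real.log t := by
      filter_upwards [eventually_ge_atTop T0, Real.tendsto_log_atTop.eventually_ge_atTop B]
        with t h1 h2
      exact ⟨h1, h2⟩
    have key : ∀ t : ℝ, T0 ≤ t → B ≤ Real.log t →
        0 ≤ Uc t * Real.log (Uc t) / ∫ x in (1:ℝ)..t, Uc x / x ∧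
        Uc t * Real.log (Uc t) / (∫ x in (1:ℝ)..t, Uc x / x)
          ≤ 8 * Real.log (K * Real.log t) / Real.log t := by
      intro t hT0t hB
      set L : ℝ := Real.log t with hLdef
      clear_value L
      rw [hBdef] at hB
      have hB1 : α1 + 1 ≤ L := le_trans (le_max_left _ _) hB
      have hB2 : 2*α1 ≤ L := le_trans (le_max_of_le_right (le_max_left _ _)) hB
      have hB3 : (1:ℝ) ≤ L := le_trans (le_max_of_le_right (le_max_of_le_right
        (le_max_left _ _))) hB
      have hB4 : α1 + 8*|C| + 1 ≤ L := le_trans (le_max_of_le_right (le_max_of_le_right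
        (le_max_right _ _))) hB
      have hα1pos : (0:ℝ) < α1 := by simp only [ha1def]; linarith
      have hDpos : (0:ℝ) < L - α1 := by linarith
      have ht1 : (1:ℝ) < t := lt_of_lt_of_le hT0gt1 hT0t
      obtain ⟨hGt, hx1t⟩ := hchar t ht1
        (by rw [← hLdef]; simp only [ha1def] at hB1; linarith)
      have hUct1 : (1:ℝ) < Uc t := lt_of_le_of_lt hx1ge1 hx1t
      have hNpos : 0 < Uc t * Real.log (Uc t) :=
        mul_pos (by linarith) (Real.log_pos hUct1)
      have hEb := hEbound t (by rw [← hLdef]; exact hB1) hT0t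
      rw [← hLdef] at hEb
      have hsplit : C + (∫ x in T0..t, Uc x / x) = ∫ x in (1:ℝ)..t, Uc x / x := by
        rw [hCdef]
        exact intervalIntegral.integral_add_adjacent_intervals hI (hIntUc t hT0t)
      have hE1 : (L - α1)/2 ≤ ∫ x in T0..t, Uc x / x := by
        have h1 : (L - α1)/2 ≤ Uc t * (L - α1)/2 := by
          nlinarith [mul_nonneg (sub_nonneg.mpr hUct1.le) hDpos.le]
        linarith
      have hDlow : Uc t * (L - α1)/4 ≤ ∫ x in (1:ℝ)..t, Uc x / x := by
        have hCabs : -|C| ≤ C := neg_abs_le C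
        have h4 : 4*|C| ≤ (L - α1)/2 := by linarith
        have h5 : Uc t * (L - α1)/4 + |C| ≤ Uc t * (L - α1)/2 := by
          nlinarith [mul_nonneg (sub_nonneg.mpr hUct1.le) hDpos.le, abs_nonneg C]
        linarith
      have hDpos' : (0:ℝ) < ∫ x in (1:ℝ)..t, Uc x / x := by
        nlinarith [mul_pos (show (0:ℝ) < Uc t by linarith) hDpos]
      constructor
      · exact le_of_lt (div_pos hNpos hDpos')
      · have hUb : Uc t ≤ K * L := by
          have h6 := hUcub t ht1 (by rw [← hLdef]; simp only [ha1def] at hB1; linarith)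
          rw [← hLdef] at h6
          have h7 : Uc t ≤ x1 + (L - α)/c := h6
          have h8 : (L - α)/c ≤ L/c + |α|/c := by
            rw [sub_div]
            have : -(α/c) ≤ |α|/c := by
              rw [← neg_div]
              exact div_le_div_of_nonneg_right (neg_le_abs α) hc.le
            linarith
          have h9 : x1 + L/c + |α|/c ≤ K * L := by
            have hx1' : x1 ≤ x1 * L := le_mul_of_one_le_right (by linarith) hB3
            have h10 : L/c ≤ (1/c) * L := le_of_eq (by ring)
            have h11 : |α|/c ≤ (|α|/c) * L := le_mul_of_one_le_right (by positivity) hB3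
            simp only [hKdef]
            nlinarith
          linarith only [h7, h8, h9]
        calc Uc t * Real.log (Uc t) / (∫ x in (1:ℝ)..t, Uc x / x)
            ≤ Uc t * Real.log (Uc t) / (Uc t * (L - α1)/4) :=
              div_le_div_of_nonneg_left hNpos.le
                (by nlinarith [mul_pos (show (0:ℝ) < Uc t by linarith) hDpos]) hDlow
          _ = 4 * Real.log (Uc t) / (L - α1) := by
              have h0 : Uc t ≠ 0 := by linarith
              have hD0 : L - α1 ≠ 0 := ne_of_gt hDpos
              field_simp
              try ring
          _ ≤ 4 * Real.log (K * L) / (L - α1) := by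
              apply div_le_div_of_nonneg_right _ hDpos.le
              have := Real.log_le_log (by linarith : (0:ℝ) < Uc t) hUb
              linarith
          _ ≤ 8 * Real.log (K * L) / L := by
              have hKL1 : (1:ℝ) ≤ K * L := by
                have := mul_le_mul hK1 hB3 zero_le_one (le_trans zero_le_one hK1)
                linarith
              have hlogKL : 0 ≤ Real.log (K * L) := Real.log_nonneg hKL1
              rw [div_le_div_iff₀ hDpos (by linarith : (0:ℝ) < L)]
              nlinarith [mul_nonneg hlogKL (by linarith : (0:ℝ) ≤ L - 2*α1)]
    have hlim : Tendsto (fun u : ℝ => 8 * Real.log (K*u)/u) atTop (nhds 0) := by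
      have h1 : Tendsto (fun y : ℝ => Real.log y / y) atTop (nhds 0) :=
        Real.isLittleO_log_id_atTop.tendsto_div_nhds_zero
      have h2 : Tendsto (fun u : ℝ => K * u) atTop atTop :=
        Tendsto.const_mul_atTop (by linarith) tendsto_id
      have h3 := (h1.comp h2).const_mul (8*K)
      rw [mul_zero] at h3
      apply h3.congr'
      filter_upwards [eventually_gt_atTop (0:ℝ)] with u hu
      have hKu : K * u ≠ 0 := ne_of_gt (mul_pos (lt_of_lt_of_le zero_lt_one hK1) hu)
      simp only [Function.comp_apply]
      field_simp
    have hlim2 : Tendsto (fun t : ℝ => 8 * Real.log (K * Real.log t) / Real.log t)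
        atTop (nhds 0) := hlim.comp Real.tendsto_log_atTop
    apply squeeze_zero' _ _ hlim2
    · filter_upwards [hbig] with t ht
      exact (key t ht.1 ht.2).1
    · filter_upwards [hbig] with t ht
      exact (key t ht.1 ht.2).2
  · -- degenerate case: the integral is identically zero for large t
    have hzero : ∀ᶠ t : ℝ in atTop, Uc t * Real.log (Uc t) / (∫ x in (1:ℝ)..t, Uc x / x) = 0 := by
      filter_upwards [eventually_ge_atTop T0] with t ht
      have : ¬ IntervalIntegrable (fun x => Uc x / x) volume 1 t := by
        intro h
        apply hI
        apply h.mono_set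
        rw [Set.uIcc_of_le (le_of_lt hT0gt1), Set.uIcc_of_le (by linarith [hT0gt1] : (1:ℝ) ≤ t)]
        exact Set.Icc_subset_Icc le_rfl ht
      rw [intervalIntegral.integral_undef this, div_zero]
    exact Tendsto.congr' (hzero.mono fun t ht => ht.symm) tendsto_const_nhds
end

section
/- Let Y_1,…,Y_n be i.i.d. with absolutely continuous distribution function F with non-decreasing hazard rate, and let Y_{n,n} = max(Y_1,…,Y_n) and U(t) = inf{x : F(x) ≥ 1−1/t}. Then E[Y_{n,n}] ≤ U(exp(H_n)), where H_n = Σ_{i=1}^n 1/i. -/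
open MeasureTheory ProbabilityTheory Real
open scoped ENNReal

set_option maxHeartbeats 1000000 in
/-- Let `Y_1, …, Y_n` be i.i.d. with absolutely continuous distribution
function `F` (density `f`) with non-decreasing hazard rate `f / (1 - F)`, and let
`Y_{n,n}` be the sample maximum and `U(t) = inf {x | F x ≥ 1 - 1/t}`. Then
`E[Y_{n,n}] ≤ U (exp H_n)` where `H_n = ∑_{i=1}^n 1/i`. -/
theorem stmt6 {Ω : Type*} [MeasureSpace Ω] [IsProbabilityMeasure (ℙ : Measure Ω)]
    (n : ℕ) (hn : 1 ≤ n) (Y : Fin n → Ω → ℝ) (μ : Measure ℝ)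
    (F f U : ℝ → ℝ)
    (hmeas : ∀ i, Measurable (Y i))
    (hindep : iIndepFun Y ℙ)
    (hdist : ∀ i, Measure.map (Y i) ℙ = μ)
    (hF : ∀ x, F x = (μ (Set.Iic x)).toReal)
    (hdens : ∀ x, F x = ∫ y in Set.Iic x, f y)
    (hf_nonneg : ∀ x, 0 ≤ f x)
    (hFlt : ∀ x, F x < 1)
    (hhaz : Monotone fun x => f x / (1 - F x))
    (hU : ∀ t, U t = sInf {x : ℝ | F x ≥ 1 - 1 / t})
    (hint : Integrable (fun ω => ⨆ i, Y i ω) ℙ) :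
    ∫ ω, (⨆ i, Y i ω) ∂ℙ
      ≤ U (Real.exp (∑ i ∈ Finset.range n, (1 : ℝ) / (i + 1))) := by
  classical
  haveI hne : Nonempty (Fin n) := ⟨⟨0, hn⟩⟩
  set H : ℝ := ∑ i ∈ Finset.range n, (1 : ℝ) / (i + 1) with hHdef
  have hHpos : 0 < H := by
    apply Finset.sum_pos (fun i _ => by positivity)
    exact Finset.nonempty_range_iff.mpr (by omega)
  -- μ is a probability measure
  haveI hμprob : IsProbabilityMeasure μ := by
    rw [← hdist ⟨0, hn⟩]
    exact Measure.isProbabilityMeasure_map (hmeas _).aemeasurable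
  have hμIic : ∀ x, μ (Set.Iic x) = ENNReal.ofReal (F x) := by
    intro x; rw [hF x, ENNReal.ofReal_toReal (measure_ne_top μ _)]
  -- basic properties of F
  have hFmono : Monotone F := by
    intro a b hab
    rw [hF a, hF b]
    exact ENNReal.toReal_mono (measure_ne_top μ _) (measure_mono (Set.Iic_subset_Iic.2 hab))
  have hF0 : ∀ x, 0 ≤ F x := fun x => (hF x) ▸ ENNReal.toReal_nonneg
  have hGpos : ∀ x, 0 < 1 - F x := fun x => by linarith [hFlt x]
  have hFtop : Filter.Tendsto F Filter.atTop (nhds 1) := by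
    have h1 := tendsto_measure_Iic_atTop μ
    have h2 := (ENNReal.tendsto_toReal (measure_ne_top μ Set.univ)).comp h1
    have h3 : (μ Set.univ).toReal = 1 := by simp
    rw [h3] at h2
    exact h2.congr fun x => (hF x).symm
  have hFbot : Filter.Tendsto F Filter.atBot (nhds 0) := by
    have hiI : ⋂ x : ℝ, Set.Iic x = (∅ : Set ℝ) := by
      ext y; simp only [Set.mem_iInter, Set.mem_Iic, Set.mem_empty_iff_false, iff_false, not_forall]
      exact ⟨y - 1, by push_neg; linarith⟩
    have h1 := tendsto_measure_iInter_atBot (μ := μ) (s := fun x : ℝ => Set.Iic x)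
      (fun x => measurableSet_Iic.nullMeasurableSet) (fun a b hab => Set.Iic_subset_Iic.2 hab)
      ⟨0, measure_ne_top μ _⟩
    rw [hiI, measure_empty] at h1
    have h2 := (ENNReal.tendsto_toReal (by simp : (0:ℝ≥0∞) ≠ ⊤)).comp h1
    simp only [ENNReal.toReal_zero] at h2
    exact h2.congr fun x => (hF x).symm
  -- integrability of the density
  have hIntOn : ∀ x, IntegrableOn f (Set.Iic x) := by
    have hbig : ∀ x, 0 < F x → IntegrableOn f (Set.Iic x) := by
      intro x hx
      by_contra hc
      rw [hdens x, integral_undef hc] at hx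
      exact lt_irrefl _ hx
    obtain ⟨x0, hx0⟩ : ∃ x0, 1/2 < F x0 :=
      (hFtop.eventually (eventually_gt_nhds (by norm_num : (1:ℝ)/2 < 1))).exists
    intro x
    have h1 : 0 < F (max x x0) := lt_of_lt_of_le (by linarith) (hFmono (le_max_right x x0))
    exact (hbig _ h1).mono_set (Set.Iic_subset_Iic.2 (le_max_left x x0))
  -- F as integral over Ioc
  have hsplit : ∀ a b : ℝ, a ≤ b → F b - F a = ∫ y in Set.Ioc a b, f y := by
    intro a b hab
    rw [hdens a, hdens b, ← Set.Iic_union_Ioc_eq_Iic hab,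
      setIntegral_union (Set.Iic_disjoint_Ioc le_rfl) measurableSet_Ioc (hIntOn a)
        ((hIntOn b).mono_set Set.Ioc_subset_Iic_self)]
    ring
  -- continuity of F
  have hFcont : Continuous F := by
    rw [continuous_iff_continuousAt]
    intro x
    have h1 : IntegrableOn f (Set.Iic (x + 1)) := hIntOn _
    have key : Filter.Tendsto (fun y => ∫ t, Set.indicator (Set.Iic y) f t) (nhds x)
        (nhds (∫ t, Set.indicator (Set.Iic x) f t)) := by
      apply tendsto_integral_filter_of_dominated_convergence
        (bound := Set.indicator (Set.Iic (x + 1)) fun t => ‖f t‖)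
      · filter_upwards [eventually_le_nhds (lt_add_one x)] with y hy
        rw [aestronglyMeasurable_indicator_iff measurableSet_Iic]
        exact ((h1.mono_set (Set.Iic_subset_Iic.2 hy)).aestronglyMeasurable)
      · filter_upwards [eventually_le_nhds (lt_add_one x)] with y hy
        apply Filter.Eventually.of_forall; intro t
        rw [norm_indicator_eq_indicator_norm]
        exact Set.indicator_le_indicator_of_subset (Set.Iic_subset_Iic.2 hy)
          (fun t => norm_nonneg _) t
      · exact IntegrableOn.integrable_indicator h1.norm measurableSet_Iic
      · have hae : ∀ᵐ t : ℝ, t ≠ x := by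
          rw [ae_iff]
          convert Real.volume_singleton (a := x) using 2
          ext t; simp
        filter_upwards [hae] with t ht
        rcases lt_or_gt_of_ne ht with h | h
        · apply Filter.Tendsto.congr' _ tendsto_const_nhds
          filter_upwards [eventually_gt_nhds h] with y hy
          simp [Set.indicator_of_mem, Set.mem_Iic, hy.le, h.le]
        · apply Filter.Tendsto.congr' _ tendsto_const_nhds
          filter_upwards [eventually_lt_nhds h] with y hy
          simp [Set.indicator_of_notMem, Set.mem_Iic, not_le.2 hy, not_le.2 h]
    have hFeq : ∀ y, F y = ∫ t, Set.indicator (Set.Iic y) f t := by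
      intro y; rw [hdens y, integral_indicator measurableSet_Iic]
    have hFfun : F = fun y => ∫ t, Set.indicator (Set.Iic y) f t := funext hFeq
    rw [hFfun]
    exact key
  -- the quantile point
  set p : ℝ := 1 - Real.exp (-H) with hpdef
  have hexpH1 : Real.exp (-H) < 1 := Real.exp_lt_one_iff.mpr (by linarith)
  have hp0 : 0 < p := by simp only [hpdef]; linarith
  have hp1 : p < 1 := by simp only [hpdef]; linarith [Real.exp_pos (-H)]
  set S : Set ℝ := {x : ℝ | p ≤ F x} with hSdef
  have hSclosed : IsClosed S := isClosed_Ici.preimage hFcont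
  have hSne : S.Nonempty := by
    obtain ⟨x, hx⟩ := (hFtop.eventually (eventually_gt_nhds hp1)).exists
    exact ⟨x, hx.le⟩
  have hSbdd : BddBelow S := by
    obtain ⟨x1, hx1⟩ := Filter.eventually_atBot.mp (hFbot.eventually (eventually_lt_nhds hp0))
    refine ⟨x1, fun s hs => ?_⟩
    by_contra hlt
    exact absurd hs (not_le.mpr (hx1 s (le_of_not_ge hlt)))
  set xs : ℝ := sInf S with hxsdef
  have hxsS : xs ∈ S := hSclosed.csInf_mem hSne hSbdd
  have hFxs : p ≤ F xs := hxsS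
  -- hazard rate
  set h : ℝ → ℝ := fun x => f x / (1 - F x) with hhdef
  have hfx : ∀ x, f x = h x * (1 - F x) := fun x => (div_mul_cancel₀ _ (hGpos x).ne').symm
  have hhnn : ∀ x, 0 ≤ h x := fun x => div_nonneg (hf_nonneg x) (hGpos x).le
  have hstar_pos : 0 < h xs := by
    rcases (hhnn xs).lt_or_eq with h1 | h1
    · exact h1
    · exfalso
      have hzero : ∀ y ∈ Set.Iic xs, f y = 0 := by
        intro y hy
        have h2 : h y ≤ h xs := hhaz hy
        have h3 : h y = 0 := le_antisymm (h1 ▸ h2) (hhnn y)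
        have := hfx y
        rw [h3, zero_mul] at this
        exact this
      have : F xs = 0 := by
        rw [hdens xs, setIntegral_congr_fun measurableSet_Iic hzero, integral_zero]
      linarith
  -- Gronwall-type steps
  have stepA : ∀ a b : ℝ, xs ≤ a → a ≤ b →
      (1 - F b) * (1 + h xs * (b - a)) ≤ 1 - F a := by
    intro a b ha hab
    have key : h xs * (1 - F b) * (b - a) ≤ F b - F a := by
      rw [hsplit a b hab]
      have hpt : ∀ y ∈ Set.Ioc a b, h xs * (1 - F b) ≤ f y := by
        intro y hy
        rw [hfx y]
        exact mul_le_mul (hhaz (ha.trans hy.1.le)) (by linarith [hFmono hy.2])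
          (by linarith [hGpos b]) (hhnn y)
      calc h xs * (1 - F b) * (b - a)
          = ∫ _ in Set.Ioc a b, h xs * (1 - F b) := by
            rw [setIntegral_const, Real.volume_real_Ioc_of_le hab, smul_eq_mul]
            ring
        _ ≤ ∫ y in Set.Ioc a b, f y :=
            setIntegral_mono_on (integrableOn_const measure_Ioc_lt_top.ne)
              ((hIntOn b).mono_set Set.Ioc_subset_Iic_self) measurableSet_Ioc hpt
    nlinarith [key]
  have stepB : ∀ a b : ℝ, a ≤ b → b ≤ xs →
      (1 - F a) * (1 - h xs * (b - a)) ≤ 1 - F b := by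
    intro a b hab hb
    have key : F b - F a ≤ h xs * (1 - F a) * (b - a) := by
      rw [hsplit a b hab]
      have hpt : ∀ y ∈ Set.Ioc a b, f y ≤ h xs * (1 - F a) := by
        intro y hy
        rw [hfx y]
        exact mul_le_mul (hhaz (hy.2.trans hb)) (by linarith [hFmono hy.1.le])
          (by linarith [hGpos y]) (hhnn xs)
      calc ∫ y in Set.Ioc a b, f y
          ≤ ∫ _ in Set.Ioc a b, h xs * (1 - F a) :=
            setIntegral_mono_on ((hIntOn b).mono_set Set.Ioc_subset_Iic_self)
              (integrableOn_const measure_Ioc_lt_top.ne) measurableSet_Ioc hpt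
        _ = h xs * (1 - F a) * (b - a) := by
            rw [setIntegral_const, Real.volume_real_Ioc_of_le hab, smul_eq_mul]
            ring
    nlinarith [key]
  have iterA : ∀ (k : ℕ) (δ : ℝ), 0 ≤ δ →
      (1 - F (xs + k * δ)) * (1 + h xs * δ) ^ k ≤ 1 - F xs := by
    intro k δ hδ
    induction k with
    | zero => simp
    | succ k ih =>
      have hb : xs + (k:ℝ) * δ ≤ xs + (k + 1 : ℕ) * δ := by
        push_cast; nlinarith
      have ha : xs ≤ xs + (k:ℝ) * δ := by nlinarith
      have h1 := stepA _ _ ha hb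
      have hba : (xs + ((k:ℕ) + 1 : ℕ) * δ) - (xs + (k:ℝ) * δ) = δ := by push_cast; ring
      rw [hba] at h1
      have h2 : 0 ≤ (1 + h xs * δ) ^ k := by positivity
      calc (1 - F (xs + ((k:ℕ) + 1 : ℕ) * δ)) * (1 + h xs * δ) ^ (k + 1)
          = ((1 - F (xs + ((k:ℕ) + 1 : ℕ) * δ)) * (1 + h xs * δ)) * (1 + h xs * δ) ^ k := by
            ring
        _ ≤ (1 - F (xs + (k:ℝ) * δ)) * (1 + h xs * δ) ^ k :=
            mul_le_mul_of_nonneg_right h1 h2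
        _ ≤ 1 - F xs := ih
  have iterB : ∀ (k : ℕ) (δ : ℝ), 0 ≤ δ → h xs * δ ≤ 1 → ∀ x : ℝ, x + k * δ ≤ xs →
      (1 - F x) * (1 - h xs * δ) ^ k ≤ 1 - F (x + k * δ) := by
    intro k δ hδ hδ1
    induction k with
    | zero => intro x _; simp
    | succ k ih =>
      intro x hx
      have hkk : x + (k:ℝ) * δ ≤ xs := by push_cast at hx ⊢; nlinarith
      have h1 := ih x hkk
      have hab : x + (k:ℝ) * δ ≤ x + ((k:ℕ) + 1 : ℕ) * δ := by push_cast; nlinarith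
      have h2 := stepB _ _ hab (by push_cast at hx ⊢; nlinarith)
      have hba : (x + ((k:ℕ) + 1 : ℕ) * δ) - (x + (k:ℝ) * δ) = δ := by push_cast; ring
      rw [hba] at h2
      calc (1 - F x) * (1 - h xs * δ) ^ (k + 1)
          = ((1 - F x) * (1 - h xs * δ) ^ k) * (1 - h xs * δ) := by ring
        _ ≤ (1 - F (x + (k:ℝ) * δ)) * (1 - h xs * δ) :=
            mul_le_mul_of_nonneg_right h1 (by linarith)
        _ ≤ 1 - F (x + ((k:ℕ) + 1 : ℕ) * δ) := h2
  -- exponential bound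
  have hGbound : ∀ x : ℝ, (1 - F x) * Real.exp (h xs * (x - xs)) ≤ 1 - F xs := by
    intro x
    have htend : Filter.Tendsto
        (fun k : ℕ => (1 - F x) * (1 + (h xs * (x - xs)) / k) ^ k) Filter.atTop
        (nhds ((1 - F x) * Real.exp (h xs * (x - xs)))) :=
      (Real.tendsto_one_add_div_pow_exp (h xs * (x - xs))).const_mul _
    apply le_of_tendsto htend
    rcases le_total xs x with hx | hx
    · filter_upwards [Filter.eventually_gt_atTop 0] with k hk
      have hk0 : (0:ℝ) < k := by exact_mod_cast hk
      have hδ : 0 ≤ (x - xs) / k := div_nonneg (by linarith) hk0.le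
      have h1 := iterA k ((x - xs) / k) hδ
      rw [show xs + (k:ℝ) * ((x - xs) / k) = x by field_simp; ring] at h1
      rw [mul_div_assoc]
      exact h1
    · filter_upwards [Filter.eventually_gt_atTop (⌈h xs * (xs - x)⌉₊)] with k hk
      have hk0 : (0:ℝ) < k := by
        have : (0:ℕ) < k := Nat.lt_of_le_of_lt (Nat.zero_le _) hk
        exact_mod_cast this
      have hδ : 0 ≤ (xs - x) / k := div_nonneg (by linarith) hk0.le
      have hδ1 : h xs * ((xs - x) / k) ≤ 1 := by
        rw [← mul_div_assoc, div_le_one hk0]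
        exact le_trans (Nat.le_ceil _) (by exact_mod_cast hk.le)
      have h1 := iterB k ((xs - x) / k) hδ hδ1 x
        (le_of_eq (by field_simp; ring))
      rw [show x + (k:ℝ) * ((xs - x) / k) = xs by field_simp; ring] at h1
      rw [show 1 + h xs * (x - xs) / k = 1 - h xs * ((xs - x) / k) by ring]
      exact h1
  -- the pointwise quantile inequality
  set c : ℝ := (h xs)⁻¹ with hcdef
  have hcnn : 0 ≤ c := inv_nonneg.2 hstar_pos.le
  set Lam : ℝ → ℝ := fun x => -Real.log (1 - F x) with hLamdef
  have hLamle : ∀ x : ℝ, x ≤ xs + c * (Lam x - Lam xs) := by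
    intro x
    have hb := hGbound x
    have hpos : 0 < (1 - F x) * Real.exp (h xs * (x - xs)) :=
      mul_pos (hGpos x) (Real.exp_pos _)
    have h1 := Real.log_le_log hpos hb
    rw [Real.log_mul (hGpos x).ne' (Real.exp_ne_zero _), Real.log_exp] at h1
    have h2 : h xs * (x - xs) ≤ Lam x - Lam xs := by
      simp only [hLamdef]; linarith
    have h3 : x - xs ≤ (Lam x - Lam xs) / h xs := by
      rw [le_div_iff₀ hstar_pos]
      linarith [h2]
    have h4 : c * (Lam x - Lam xs) = (Lam x - Lam xs) / h xs := by
      rw [hcdef, inv_mul_eq_div]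
    rw [h4]
    linarith
  -- properties of Lam
  have hLamcont : Continuous Lam := by
    have hcl : Continuous fun x : ℝ => Real.log (1 - F x) :=
      (continuous_const.sub hFcont).log fun x => (hGpos x).ne'
    exact hcl.neg
  have hLammono : Monotone Lam := by
    intro a b hab
    simp only [hLamdef, neg_le_neg_iff]
    exact Real.log_le_log (hGpos b) (by linarith [hFmono hab])
  have hLamnn : ∀ x, 0 ≤ Lam x := by
    intro x
    simp only [hLamdef]
    have := Real.log_nonpos (hGpos x).le (by linarith [hF0 x])
    linarith
  -- the maximum and transformed maximum
  set M : Ω → ℝ := fun ω => ⨆ i, Y i ω with hMdef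
  set X : Fin n → Ω → ℝ := fun i ω => Lam (Y i ω) with hXdef
  set T : Ω → ℝ := fun ω => ⨆ i, X i ω with hTdef
  have hbddY : ∀ ω, BddAbove (Set.range fun i => Y i ω) := fun ω => (Set.finite_range _).bddAbove
  have hbddX : ∀ ω, BddAbove (Set.range fun i => X i ω) := fun ω => (Set.finite_range _).bddAbove
  have hTLam : ∀ ω, T ω = Lam (M ω) := by
    intro ω
    obtain ⟨j, hj⟩ := Finite.exists_max (fun i => Y i ω)
    have hMj : M ω = Y j ω := le_antisymm (ciSup_le hj) (le_ciSup (hbddY ω) j)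
    apply le_antisymm
    · exact ciSup_le fun i => hLammono (le_ciSup (hbddY ω) i)
    · rw [hMj]
      exact le_ciSup (hbddX ω) j
  have hTnn : ∀ ω, 0 ≤ T ω := fun ω => (hTLam ω) ▸ hLamnn (M ω)
  have hMle : ∀ ω, M ω ≤ xs + c * (T ω - Lam xs) := by
    intro ω
    calc M ω ≤ xs + c * (Lam (M ω) - Lam xs) := hLamle (M ω)
      _ = xs + c * (T ω - Lam xs) := by rw [hTLam ω]
  -- measurability
  have hXmeas : ∀ i, Measurable (X i) := fun i => hLamcont.measurable.comp (hmeas i)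
  have hTaesm : AEStronglyMeasurable T ℙ := by
    have : T = Lam ∘ M := funext hTLam
    rw [this]
    exact hLamcont.comp_aestronglyMeasurable hint.1
  -- independence of the transformed variables
  have hXind : iIndepFun X ℙ :=
    hindep.comp (fun _ => Lam) (fun _ => hLamcont.measurable)
  -- the tail of T
  have hTtail : ∀ t : ℝ,
      ℙ {ω | t < T ω} = 1 - (μ {y | Lam y ≤ t}) ^ n := by
    intro t
    have hset : {ω | T ω ≤ t} = ⋂ i, X i ⁻¹' Set.Iic t := by
      ext ω
      simp only [Set.mem_setOf_eq, Set.mem_iInter, Set.mem_preimage, Set.mem_Iic, hTdef]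
      exact ciSup_le_iff (hbddX ω)
    have hprod := hXind.measure_inter_preimage_eq_mul Finset.univ
      (sets := fun _ => Set.Iic t) (fun i _ => measurableSet_Iic)
    have hμX : ∀ i : Fin n, ℙ (X i ⁻¹' Set.Iic t) = μ {y | Lam y ≤ t} := by
      intro i
      have hXp : X i ⁻¹' Set.Iic t = Y i ⁻¹' (Lam ⁻¹' Set.Iic t) := rfl
      rw [hXp, ← Measure.map_apply (hmeas i) (hLamcont.measurable measurableSet_Iic), hdist i]
      rfl
    have hBi : (⋂ i ∈ Finset.univ, X i ⁻¹' Set.Iic t) = ⋂ i, X i ⁻¹' Set.Iic t := by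
      simp
    rw [hBi] at hprod
    have hcompl : {ω | t < T ω} = {ω | T ω ≤ t}ᶜ := by
      ext ω; simp [not_le]
    rw [hcompl, prob_compl_eq_one_sub (by
      rw [hset]; exact MeasurableSet.iInter fun i => hXmeas i measurableSet_Iic),
      hset, hprod]
    simp [hμX, Finset.prod_const]
  -- tail bound for a single variable
  have htail_le : ∀ t : ℝ, 0 < t →
      μ {y | t < Lam y} ≤ ENNReal.ofReal (Real.exp (-t)) := by
    intro t ht
    set v : ℝ := 1 - Real.exp (-t) with hvdef
    have hv0 : 0 < v := by
      have := Real.exp_lt_one_iff.mpr (by linarith : -t < 0)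
      simp only [hvdef]; linarith
    have hBset : {y : ℝ | t < Lam y} = F ⁻¹' Set.Ioi v := by
      ext y
      simp only [Set.mem_setOf_eq, Set.mem_preimage, Set.mem_Ioi, hLamdef, hvdef]
      rw [lt_neg]
      constructor
      · intro h1
        have h2 : 1 - F y < Real.exp (-t) := by
          have := (Real.log_lt_iff_lt_exp (hGpos y)).mp h1
          linarith [this]
        linarith
      · intro h1
        have h2 : 1 - F y < Real.exp (-t) := by linarith
        have := (Real.log_lt_iff_lt_exp (hGpos y)).mpr h2
        linarith [this]
    rcases Set.eq_empty_or_nonempty {y : ℝ | t < Lam y} with hB | hB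
    · rw [hB]; simp
    · have hBbdd : BddBelow {y : ℝ | t < Lam y} := by
        rw [hBset]
        obtain ⟨x1, hx1⟩ := Filter.eventually_atBot.mp (hFbot.eventually (eventually_lt_nhds hv0))
        refine ⟨x1, fun s hs => ?_⟩
        by_contra hlt
        exact absurd (le_of_lt hs) (not_le.mpr (hx1 s (le_of_not_ge hlt)))
      set y0 : ℝ := sInf {y : ℝ | t < Lam y} with hy0def
      have hy0cl : y0 ∈ closure {y : ℝ | t < Lam y} := csInf_mem_closure hB hBbdd
      have hFy0 : v ≤ F y0 := by
        have hsub : closure {y : ℝ | t < Lam y} ⊆ {y : ℝ | v ≤ F y} := by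
          apply closure_minimal
          · intro y hy
            rw [hBset] at hy
            exact le_of_lt (Set.mem_preimage.mp hy)
          · exact isClosed_Ici.preimage hFcont
        exact hsub hy0cl
      have hBopen : IsOpen {y : ℝ | t < Lam y} := by
        rw [hBset]
        exact isOpen_Ioi.preimage hFcont
      have hy0notB : y0 ∉ {y : ℝ | t < Lam y} := by
        intro hy0
        obtain ⟨ε, hε, hball⟩ := Metric.isOpen_iff.mp hBopen y0 hy0
        have hmem : y0 - ε / 2 ∈ {y : ℝ | t < Lam y} := by
          apply hball
          rw [Metric.mem_ball, Real.dist_eq, abs_lt]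
          constructor <;> linarith
        have h2 : y0 ≤ y0 - ε / 2 := csInf_le hBbdd hmem
        linarith
      have hsub : {y : ℝ | t < Lam y} ⊆ Set.Ioi y0 := by
        intro y hy
        rcases lt_or_eq_of_le (csInf_le hBbdd hy) with h1 | h1
        · exact h1
        · exfalso
          apply hy0notB
          rw [hy0def, h1]
          exact hy
      calc μ {y : ℝ | t < Lam y} ≤ μ (Set.Ioi y0) := measure_mono hsub
        _ = 1 - μ (Set.Iic y0) := by
            rw [← Set.compl_Iic, prob_compl_eq_one_sub measurableSet_Iic]
        _ ≤ 1 - ENNReal.ofReal v := by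
            rw [hμIic y0]
            exact tsub_le_tsub_left (ENNReal.ofReal_le_ofReal hFy0) 1
        _ = ENNReal.ofReal (Real.exp (-t)) := by
            rw [← ENNReal.ofReal_one, ← ENNReal.ofReal_sub _ hv0.le]
            congr 1
            simp only [hvdef]
            ring
  -- comparison of tails
  set g : ℝ → ℝ := fun t => 1 - (1 - Real.exp (-t)) ^ n with hgdef
  have hmain : ∀ t ∈ Set.Ioi (0:ℝ), ℙ {ω | t < T ω} ≤ ENNReal.ofReal (g t) := by
    intro t ht
    have ht' : 0 < t := ht
    have hexp1 : Real.exp (-t) < 1 := Real.exp_lt_one_iff.mpr (by linarith)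
    rw [hTtail t]
    have h1 : ENNReal.ofReal (1 - Real.exp (-t)) ≤ μ {y | Lam y ≤ t} := by
      have hc : {y : ℝ | Lam y ≤ t} = {y : ℝ | t < Lam y}ᶜ := by
        ext y; simp [not_lt]
      have hBmeas : MeasurableSet {y : ℝ | t < Lam y} :=
        hLamcont.measurable measurableSet_Ioi
      rw [hc, prob_compl_eq_one_sub hBmeas]
      calc ENNReal.ofReal (1 - Real.exp (-t))
          = 1 - ENNReal.ofReal (Real.exp (-t)) := by
            rw [← ENNReal.ofReal_one, ← ENNReal.ofReal_sub _ (Real.exp_pos (-t)).le]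
        _ ≤ 1 - μ {y | t < Lam y} := tsub_le_tsub_left (htail_le t ht') 1
    calc 1 - μ {y | Lam y ≤ t} ^ n
        ≤ 1 - (ENNReal.ofReal (1 - Real.exp (-t))) ^ n :=
          tsub_le_tsub_left (pow_le_pow_left' h1 n) 1
      _ = ENNReal.ofReal (g t) := by
          rw [← ENNReal.ofReal_pow (by linarith), ← ENNReal.ofReal_one,
            ← ENNReal.ofReal_sub _ (pow_nonneg (by linarith) n), hgdef]

  -- the antiderivative
  set Phi : ℝ → ℝ := fun t => ∑ j ∈ Finset.range n, (1 - Real.exp (-t)) ^ (j + 1) / (j + 1)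
    with hPhidef
  have hPhideriv : ∀ t : ℝ, HasDerivAt Phi (g t) t := by
    intro t
    have hterm : ∀ j ∈ Finset.range n, HasDerivAt
        (fun s => (1 - Real.exp (-s)) ^ (j + 1) / ((j:ℝ) + 1))
        (Real.exp (-t) * (1 - Real.exp (-t)) ^ j) t := by
      intro j _
      have hinner : HasDerivAt (fun s : ℝ => 1 - Real.exp (-s)) (Real.exp (-t)) t := by
        have h1 : HasDerivAt (fun s : ℝ => -s) (-1) t := (hasDerivAt_id t).neg
        have h2 := (Real.hasDerivAt_exp (-t)).comp t h1
        have h3 := h2.const_sub 1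
        refine h3.congr_deriv ?_
        ring
      have hpow := hinner.pow (j + 1)
      have hdiv := hpow.div_const ((j:ℝ) + 1)
      refine hdiv.congr_deriv ?_
      have hj : ((j:ℝ) + 1) ≠ 0 := by positivity
      rw [Nat.add_sub_cancel]; push_cast
      field_simp
    have hsum := HasDerivAt.fun_sum hterm
    have hg : g t = ∑ j ∈ Finset.range n, Real.exp (-t) * (1 - Real.exp (-t)) ^ j := by
      have hgeom := geom_sum_mul (1 - Real.exp (-t)) n
      rw [← Finset.mul_sum]
      simp only [hgdef]
      linear_combination hgeom
    rw [hg]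
    exact hsum
  have hPhitend : Filter.Tendsto Phi Filter.atTop (nhds H) := by
    rw [hPhidef, hHdef]
    apply tendsto_finset_sum
    intro j _
    have h1 : Filter.Tendsto (fun t : ℝ => Real.exp (-t)) Filter.atTop (nhds 0) :=
      Real.tendsto_exp_neg_atTop_nhds_zero
    have h2 := ((tendsto_const_nhds (x := (1:ℝ))).sub h1).pow (j + 1)
    have h3 := h2.div_const ((j:ℝ) + 1)
    simpa using h3
  have hPhi0 : Phi 0 = 0 := by
    simp [hPhidef]
  have hgnn : ∀ t ∈ Set.Ioi (0:ℝ), 0 ≤ g t := by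
    intro t ht
    have ht' : (0:ℝ) < t := ht
    have h1 : Real.exp (-t) ≤ 1 := (Real.exp_lt_one_iff.mpr (by linarith)).le
    have h2 : (1 - Real.exp (-t)) ^ n ≤ 1 :=
      pow_le_one₀ (by linarith) (by linarith [Real.exp_pos (-t)])
    simp only [hgdef]
    linarith
  have hgint : IntegrableOn g (Set.Ioi (0:ℝ)) :=
    integrableOn_Ioi_deriv_of_nonneg' (fun x _ => hPhideriv x) hgnn hPhitend
  have hgval : ∫ t in Set.Ioi (0:ℝ), g t = H := by
    rw [integral_Ioi_of_hasDerivAt_of_nonneg' (fun x _ => hPhideriv x) hgnn hPhitend,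
      hPhi0, sub_zero]
  -- the expectation of T
  have hTaem : AEMeasurable T ℙ := hTaesm.aemeasurable
  have hTlint : ∫⁻ ω, ENNReal.ofReal (T ω) ∂ℙ ≤ ENNReal.ofReal H := by
    rw [lintegral_eq_lintegral_meas_lt ℙ (Filter.Eventually.of_forall hTnn) hTaem]
    have hgm : Measurable fun t : ℝ => ENNReal.ofReal (g t) := by
      have : Continuous g := by
        simp only [hgdef]
        exact continuous_const.sub (((continuous_const.sub
          (Real.continuous_exp.comp continuous_neg))).pow n)
      exact this.measurable.ennreal_ofReal
    calc ∫⁻ t in Set.Ioi (0:ℝ), ℙ {ω | t < T ω}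
        ≤ ∫⁻ t in Set.Ioi (0:ℝ), ENNReal.ofReal (g t) := setLIntegral_mono hgm hmain
      _ = ENNReal.ofReal (∫ t in Set.Ioi (0:ℝ), g t) :=
          (ofReal_integral_eq_lintegral_ofReal hgint
            ((ae_restrict_iff' measurableSet_Ioi).2 (Filter.Eventually.of_forall hgnn))).symm
      _ = ENNReal.ofReal H := by rw [hgval]
  have hTint : Integrable T ℙ := by
    refine ⟨hTaesm, ?_⟩
    rw [hasFiniteIntegral_iff_norm]
    calc ∫⁻ ω, ENNReal.ofReal ‖T ω‖ ∂ℙ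
        = ∫⁻ ω, ENNReal.ofReal (T ω) ∂ℙ :=
          lintegral_congr fun ω => by rw [Real.norm_of_nonneg (hTnn ω)]
      _ ≤ ENNReal.ofReal H := hTlint
      _ < ⊤ := ENNReal.ofReal_lt_top
  have hTexp : ∫ ω, T ω ∂ℙ ≤ H := by
    rw [integral_eq_lintegral_of_nonneg_ae (Filter.Eventually.of_forall hTnn) hTaesm]
    have h1 := ENNReal.toReal_mono ENNReal.ofReal_ne_top hTlint
    rwa [ENNReal.toReal_ofReal hHpos.le] at h1
  -- conclusion
  have hLamxs : H ≤ Lam xs := by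
    have h1 : 1 - F xs ≤ Real.exp (-H) := by
      simp only [hpdef] at hFxs
      linarith
    have h2 : Real.log (1 - F xs) ≤ -H := by
      calc Real.log (1 - F xs) ≤ Real.log (Real.exp (-H)) :=
            Real.log_le_log (hGpos xs) h1
        _ = -H := Real.log_exp _
    simp only [hLamdef]
    linarith
  have hfinal : ∫ ω, M ω ∂ℙ ≤ xs := by
    have ha : Integrable (fun _ : Ω => xs) ℙ := integrable_const _
    have hb' : Integrable (fun ω => T ω - Lam xs) ℙ := hTint.sub (integrable_const _)
    have hb : Integrable (fun ω => c * (T ω - Lam xs)) ℙ := hb'.const_mul c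
    have hint2 : Integrable (fun ω => xs + c * (T ω - Lam xs)) ℙ := ha.add hb
    have h1 : ∫ ω, M ω ∂ℙ ≤ ∫ ω, (xs + c * (T ω - Lam xs)) ∂ℙ :=
      integral_mono hint hint2 hMle
    have h2 : ∫ ω, (xs + c * (T ω - Lam xs)) ∂ℙ
        = xs + c * ((∫ ω, T ω ∂ℙ) - Lam xs) := by
      rw [integral_add ha hb, integral_const_mul,
        integral_sub hTint (integrable_const _), integral_const, integral_const]
      simp [measure_univ]
    rw [h2] at h1
    have h3 : c * ((∫ ω, T ω ∂ℙ) - Lam xs) ≤ 0 :=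
      mul_nonpos_of_nonneg_of_nonpos hcnn (by linarith [hTexp, hLamxs])
    linarith
  rw [hU]
  have hSeq : {x : ℝ | F x ≥ 1 - 1 / Real.exp H} = S := by
    ext x
    simp only [hSdef, Set.mem_setOf_eq, ge_iff_le, hpdef, Real.exp_neg, one_div]
  rw [hSeq, ← hxsdef]
  exact hfinal
end

section
/- Let Y_1,…,Y_n be i.i.d. square-integrable real random variables with order statistics Y_{1,n} ≤ … ≤ Y_{n,n}. Then E[Y_{n,n}²] ≤ (E[Y_{n,n}])² + E[(Y_{n,n} − Y_{n−1,n})²]. -/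
open MeasureTheory ProbabilityTheory Real

private lemma sq_integral_le' {β : Type*} [MeasurableSpace β] (κ : Measure β)
    [IsProbabilityMeasure κ] (u : β → ℝ) (hu : AEStronglyMeasurable u κ)
    (hu2 : Integrable (fun x => u x ^ 2) κ) :
    (∫ x, u x ∂κ) ^ 2 ≤ ∫ x, u x ^ 2 ∂κ := by
  have hmem : MemLp u 2 κ := (memLp_two_iff_integrable_sq hu).2 hu2
  have h := variance_nonneg u κ
  rw [variance_eq_sub hmem] at h
  have he : κ[u ^ 2] = ∫ x, u x ^ 2 ∂κ := by simp [Pi.pow_apply]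
  rw [he] at h
  linarith

private lemma tensorization :
    ∀ (n : ℕ) (ν : Fin n → Measure ℝ), (∀ i, IsProbabilityMeasure (ν i)) →
    ∀ (f : (Fin n → ℝ) → ℝ) (g : Fin n → (Fin n → ℝ) → ℝ),
      Measurable f → (∀ i, Measurable (g i)) →
      (∀ (i : Fin n) (x : Fin n → ℝ) (t : ℝ), g i (Function.update x i t) = g i x) →
      Integrable (fun x => f x ^ 2) (Measure.pi ν) →
      (∀ i, Integrable (fun x => (f x - g i x) ^ 2) (Measure.pi ν)) →
      ∫ x, f x ^ 2 ∂Measure.pi ν ≤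
        (∫ x, f x ∂Measure.pi ν) ^ 2 + ∑ i, ∫ x, (f x - g i x) ^ 2 ∂Measure.pi ν := by
  intro n
  induction n with
  | zero =>
    intro ν hprob f g hf hg hgupd hf2 hfg2
    haveI : ∀ i, IsProbabilityMeasure (ν i) := hprob
    haveI : IsProbabilityMeasure (Measure.pi ν) := by infer_instance
    have hc : f = fun _ => f (fun i => i.elim0) := by
      funext x; exact congrArg f (Subsingleton.elim _ _)
    rw [hc]
    simp
  | succ n IH =>
    intro ν hprob f g hf hg hgupd hf2 hfg2
    haveI : ∀ i, IsProbabilityMeasure (ν i) := hprob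
    set ν' : Fin n → Measure ℝ := fun i => ν ((0 : Fin (n + 1)).succAbove i) with hν'
    haveI : ∀ i, IsProbabilityMeasure (ν' i) := fun i => hprob _
    set μ0 : Measure ℝ := ν 0 with hμ0
    set κ : Measure (Fin n → ℝ) := Measure.pi ν' with hκ
    haveI : IsProbabilityMeasure κ := by rw [hκ]; infer_instance
    set P : Measure (ℝ × (Fin n → ℝ)) := μ0.prod κ with hP
    set e := MeasurableEquiv.piFinSuccAbove (fun _ : Fin (n + 1) => ℝ) 0 with he
    have mp : MeasurePreserving e (Measure.pi ν) P := measurePreserving_piFinSuccAbove ν 0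
    have hsymm : ∀ p : ℝ × (Fin n → ℝ), e.symm p = Fin.cons p.1 p.2 := by
      intro p
      simp only [he, MeasurableEquiv.piFinSuccAbove_symm_apply]
      exact Fin.insertNth_zero' p.1 p.2
    have hee : ∀ x : Fin (n + 1) → ℝ, (Fin.cons (e x).1 (e x).2 : Fin (n + 1) → ℝ) = x := by
      intro x
      rw [← hsymm]
      exact e.symm_apply_apply x
    -- transfer of integrals
    have hint_transfer : ∀ (φ : (Fin (n + 1) → ℝ) → ℝ),
        ∫ x, φ x ∂Measure.pi ν = ∫ p, φ (Fin.cons p.1 p.2) ∂P := by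
      intro φ
      have := mp.integral_comp e.measurableEmbedding (fun p => φ (Fin.cons p.1 p.2))
      rw [← this]
      congr 1
      funext x
      rw [hee x]
    have hintg_transfer : ∀ (φ : (Fin (n + 1) → ℝ) → ℝ),
        Integrable φ (Measure.pi ν) ↔ Integrable (fun p => φ (Fin.cons p.1 p.2)) P := by
      intro φ
      rw [← mp.map_eq, integrable_map_equiv]
      constructor <;> intro h1 <;> [skip; skip] <;>
        · convert h1 using 1
          funext x
          simp only [Function.comp_apply]
          rw [hee x]
    -- main objects
    have hmc : Measurable fun p : ℝ × (Fin n → ℝ) => (Fin.cons p.1 p.2 : Fin (n + 1) → ℝ) := by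
      have h1 : (fun p : ℝ × (Fin n → ℝ) => (Fin.cons p.1 p.2 : Fin (n + 1) → ℝ)) = ⇑e.symm :=
        (funext hsymm).symm
      rw [h1]; exact e.symm.measurable
    have hmc' : ∀ t : ℝ, Measurable fun x : Fin n → ℝ => (Fin.cons t x : Fin (n + 1) → ℝ) :=
      fun t => hmc.comp (measurable_const.prodMk measurable_id)
    set F : ℝ × (Fin n → ℝ) → ℝ := fun p => f (Fin.cons p.1 p.2) with hFdef
    have hFmeas : Measurable F := hf.comp hmc
    have hF2P : Integrable (fun p => F p ^ 2) P := (hintg_transfer (fun x => f x ^ 2)).1 hf2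
    have hFG2P : ∀ i : Fin (n + 1),
        Integrable (fun p => (F p - g i (Fin.cons p.1 p.2)) ^ 2) P :=
      fun i => (hintg_transfer (fun x => (f x - g i x) ^ 2)).1 (hfg2 i)
    set G0 : (Fin n → ℝ) → ℝ := fun x => g 0 (Fin.cons 0 x) with hG0def
    have hg0key : ∀ (t : ℝ) (x : Fin n → ℝ), g 0 (Fin.cons t x) = G0 x := by
      intro t x
      have h1 : (Fin.cons t x : Fin (n + 1) → ℝ) = Function.update (Fin.cons 0 x) 0 t :=
        (Fin.update_cons_zero _ _ _).symm
      rw [h1, hgupd]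
    have hG0meas : Measurable G0 := (hg 0).comp (hmc' 0)
    have hFG2P0 : Integrable (fun p => (F p - G0 p.2) ^ 2) P := by
      have := hFG2P 0
      simpa only [hg0key] using this
    set h : ℝ → ℝ := fun t => ∫ x, F (t, x) ∂κ with hhdef
    set H : ℝ → ℝ := fun t => ∫ x, F (t, x) ^ 2 ∂κ with hHdef
    have hhsm : StronglyMeasurable h := hFmeas.stronglyMeasurable.integral_prod_right'
    -- slice facts
    have hslicemeas : ∀ t : ℝ, Measurable fun x => F (t, x) :=
      fun t => hFmeas.comp measurable_prodMk_left
    have hslice2 : ∀ᵐ t ∂μ0, Integrable (fun x => F (t, x) ^ 2) κ :=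
      hF2P.prod_right_ae
    have hsliceF : ∀ᵐ t ∂μ0, Integrable (fun x => F (t, x)) κ := by
      filter_upwards [hslice2] with t h2t
      exact ((memLp_two_iff_integrable_sq (hslicemeas t).aestronglyMeasurable).2 h2t).integrable
        one_le_two
    have hsliceg : ∀ᵐ t ∂μ0, ∀ i : Fin n,
        Integrable (fun x => (F (t, x) - g i.succ (Fin.cons t x)) ^ 2) κ :=
      ae_all_iff.2 fun i => (hFG2P i.succ).prod_right_ae
    have hsliceg0 : ∀ᵐ t ∂μ0, Integrable (fun x => (F (t, x) - G0 x) ^ 2) κ :=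
      hFG2P0.prod_right_ae
    -- induction hypothesis, applied at a.e. t
    have haeIH : ∀ᵐ t ∂μ0, H t ≤ h t ^ 2 +
        ∑ i : Fin n, ∫ x, (F (t, x) - g i.succ (Fin.cons t x)) ^ 2 ∂κ := by
      filter_upwards [hslice2, hsliceg] with t h2t hgt
      refine IH ν' (fun i => hprob _) (fun x => F (t, x))
        (fun i x => g i.succ (Fin.cons t x)) ((hslicemeas t)) (fun i => (hg i.succ).comp (hmc' t))
        ?_ h2t hgt
      intro i x s
      show g i.succ (Fin.cons t (Function.update x i s)) = g i.succ (Fin.cons t x)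
      have h1 : (Fin.cons t (Function.update x i s) : Fin (n + 1) → ℝ) =
          Function.update (Fin.cons t x) i.succ s := by simp
      rw [h1, hgupd]
    -- integrability over μ0
    have HInt : Integrable H μ0 := hF2P.integral_prod_left
    have DInt : ∀ i : Fin n,
        Integrable (fun t => ∫ x, (F (t, x) - g i.succ (Fin.cons t x)) ^ 2 ∂κ) μ0 :=
      fun i => (hFG2P i.succ).integral_prod_left
    have D0Int : Integrable (fun t => ∫ x, (F (t, x) - G0 x) ^ 2 ∂κ) μ0 :=
      hFG2P0.integral_prod_left
    have hh2H : ∀ᵐ t ∂μ0, h t ^ 2 ≤ H t := by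
      filter_upwards [hslice2] with t h2t
      exact sq_integral_le' κ _ (hslicemeas t).aestronglyMeasurable h2t
    have Hnonneg : ∀ t, 0 ≤ H t := fun t => integral_nonneg fun x => sq_nonneg _
    have h2Int : Integrable (fun t => h t ^ 2) μ0 := by
      refine HInt.mono ((hhsm.measurable.pow_const 2).aestronglyMeasurable) ?_
      filter_upwards [hh2H] with t ht
      rw [Real.norm_eq_abs, Real.norm_eq_abs, abs_of_nonneg (sq_nonneg _),
        abs_of_nonneg (Hnonneg t)]
      exact ht
    have hInt : Integrable h μ0 :=
      ((memLp_two_iff_integrable_sq hhsm.aestronglyMeasurable).2 h2Int).integrable one_le_two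
    -- G0 integrable over κ
    have MemF : MemLp F 2 P := (memLp_two_iff_integrable_sq hFmeas.aestronglyMeasurable).2 hF2P
    have MemFG : MemLp (fun p => F p - G0 p.2) 2 P :=
      (memLp_two_iff_integrable_sq
        ((hFmeas.sub (hG0meas.comp measurable_snd)).aestronglyMeasurable)).2 hFG2P0
    have MemG0 : MemLp (fun p : ℝ × (Fin n → ℝ) => G0 p.2) 2 P := by
      have h3 := MemF.sub MemFG
      have h4 : (F - fun p => F p - G0 p.2) = fun p : ℝ × (Fin n → ℝ) => G0 p.2 := by
        funext p; simp only [Pi.sub_apply]; ring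
      rwa [h4] at h3
    have hG0Int : Integrable G0 κ := by
      have hmap2 : Measure.map Prod.snd P = κ := by
        rw [hP, Measure.map_snd_prod]; simp
      rw [← hmap2]
      exact (integrable_map_measure hG0meas.aestronglyMeasurable
        measurable_snd.aemeasurable).2 (MemG0.integrable one_le_two)
    set c : ℝ := ∫ x, G0 x ∂κ with hcdef
    have hc_ae : ∀ᵐ t ∂μ0, (h t - c) ^ 2 ≤ ∫ x, (F (t, x) - G0 x) ^ 2 ∂κ := by
      filter_upwards [hsliceF, hsliceg0] with t hFt hdt
      have hsub : h t - c = ∫ x, (F (t, x) - G0 x) ∂κ := (integral_sub hFt hG0Int).symm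
      rw [hsub]
      exact sq_integral_le' κ _ ((hslicemeas t).sub hG0meas).aestronglyMeasurable hdt
    have hrepr : (fun t => (h t - c) ^ 2) = fun t => h t ^ 2 - 2 * c * h t + c ^ 2 := by
      funext t; ring
    have hc2Int : Integrable (fun t => (h t - c) ^ 2) μ0 := by
      rw [hrepr]
      exact (h2Int.sub (hInt.const_mul (2 * c))).add (integrable_const _)
    have expand : ∫ t, (h t - c) ^ 2 ∂μ0 =
        ∫ t, h t ^ 2 ∂μ0 - 2 * c * ∫ t, h t ∂μ0 + c ^ 2 := by
      have i3 : Integrable (fun t => 2 * c * h t) μ0 := hInt.const_mul (2 * c)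
      have i1 : Integrable (fun t => h t ^ 2 - 2 * c * h t) μ0 := h2Int.sub i3
      have i2 : Integrable (fun _ : ℝ => c ^ 2) μ0 := integrable_const _
      rw [hrepr, integral_add i1 i2, integral_sub h2Int i3, integral_const_mul, integral_const]
      simp
    have hmono4 := integral_mono_ae hc2Int D0Int hc_ae
    have step4 : ∫ t, h t ^ 2 ∂μ0 ≤ (∫ t, h t ∂μ0) ^ 2 +
        ∫ t, ∫ x, (F (t, x) - G0 x) ^ 2 ∂κ ∂μ0 := by
      nlinarith [sq_nonneg ((∫ t, h t ∂μ0) - c), hmono4, expand]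
    -- transfers back
    have eq1 : ∫ x, f x ^ 2 ∂Measure.pi ν = ∫ t, H t ∂μ0 := by
      rw [hint_transfer (fun x => f x ^ 2)]
      exact integral_prod _ hF2P
    have FInt : Integrable F P := MemF.integrable one_le_two
    have eq2 : ∫ x, f x ∂Measure.pi ν = ∫ t, h t ∂μ0 := by
      rw [hint_transfer f]
      exact integral_prod _ FInt
    have eq3 : ∀ i : Fin n, ∫ x, (f x - g i.succ x) ^ 2 ∂Measure.pi ν =
        ∫ t, ∫ x, (F (t, x) - g i.succ (Fin.cons t x)) ^ 2 ∂κ ∂μ0 := by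
      intro i
      rw [hint_transfer (fun x => (f x - g i.succ x) ^ 2)]
      exact integral_prod _ (hFG2P i.succ)
    have eq4 : ∫ x, (f x - g 0 x) ^ 2 ∂Measure.pi ν =
        ∫ t, ∫ x, (F (t, x) - G0 x) ^ 2 ∂κ ∂μ0 := by
      rw [hint_transfer (fun x => (f x - g 0 x) ^ 2)]
      have h5 := integral_prod _ hFG2P0
      have h6 : ∫ p, (F p - g 0 (Fin.cons p.1 p.2)) ^ 2 ∂P =
          ∫ p, (F p - G0 p.2) ^ 2 ∂P := by
        congr 1; funext p; rw [hg0key]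
      rw [h6, h5]
    -- main chain
    have step2 : ∫ t, H t ∂μ0 ≤ ∫ t, (h t ^ 2 +
        ∑ i : Fin n, ∫ x, (F (t, x) - g i.succ (Fin.cons t x)) ^ 2 ∂κ) ∂μ0 :=
      integral_mono_ae HInt (h2Int.add (integrable_finset_sum _ fun i _ => DInt i)) haeIH
    have step3 : ∫ t, (h t ^ 2 +
        ∑ i : Fin n, ∫ x, (F (t, x) - g i.succ (Fin.cons t x)) ^ 2 ∂κ) ∂μ0 =
        ∫ t, h t ^ 2 ∂μ0 + ∑ i : Fin n,
          ∫ t, ∫ x, (F (t, x) - g i.succ (Fin.cons t x)) ^ 2 ∂κ ∂μ0 := by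
      rw [integral_add h2Int (integrable_finset_sum _ fun i _ => DInt i),
        integral_finset_sum _ fun i _ => DInt i]
    rw [Fin.sum_univ_succ]
    calc ∫ x, f x ^ 2 ∂Measure.pi ν = ∫ t, H t ∂μ0 := eq1
      _ ≤ ∫ t, h t ^ 2 ∂μ0 + ∑ i : Fin n,
            ∫ t, ∫ x, (F (t, x) - g i.succ (Fin.cons t x)) ^ 2 ∂κ ∂μ0 := by
          rw [← step3]; exact step2
      _ ≤ ((∫ t, h t ∂μ0) ^ 2 + ∫ t, ∫ x, (F (t, x) - G0 x) ^ 2 ∂κ ∂μ0) +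
            ∑ i : Fin n,
            ∫ t, ∫ x, (F (t, x) - g i.succ (Fin.cons t x)) ^ 2 ∂κ ∂μ0 := by
          linarith [step4]
      _ = (∫ x, f x ∂Measure.pi ν) ^ 2 + (∫ x, (f x - g 0 x) ^ 2 ∂Measure.pi ν +
            ∑ i : Fin n, ∫ x, (f x - g i.succ x) ^ 2 ∂Measure.pi ν) := by
          rw [eq2, eq4]
          have : ∀ i : Fin n, ∫ t, ∫ x, (F (t, x) - g i.succ (Fin.cons t x)) ^ 2 ∂κ ∂μ0 =
              ∫ x, (f x - g i.succ x) ^ 2 ∂Measure.pi ν := fun i => (eq3 i).symm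
          rw [Finset.sum_congr rfl fun i _ => this i]
          ring

private lemma key_pointwise {n : ℕ} (x : Fin n → ℝ)
    (hne : (Finset.univ : Finset (Fin n)).Nonempty)
    (hee : ∀ i : Fin n, ((Finset.univ : Finset (Fin n)).erase i).Nonempty) :
    ∑ i : Fin n, (Finset.univ.sup' hne x - (Finset.univ.erase i).sup' (hee i) x) ^ 2 ≤
      (Finset.univ.sup' hne x -
        Finset.univ.inf' hne (fun i => (Finset.univ.erase i).sup' (hee i) x)) ^ 2 := by
  set Fx := Finset.univ.sup' hne x with hFx
  set g : Fin n → ℝ := fun i => (Finset.univ.erase i).sup' (hee i) x with hgdef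
  set Gx := Finset.univ.inf' hne g with hGx
  obtain ⟨i0, -, hi0⟩ := Finset.exists_mem_eq_sup' hne x
  have hgle : ∀ i, g i ≤ Fx := fun i =>
    Finset.sup'_le _ _ fun j _ => Finset.le_sup' x (Finset.mem_univ j)
  have hGle : ∀ i, Gx ≤ g i := fun i => Finset.inf'_le g (Finset.mem_univ i)
  have hsum : ∑ i : Fin n, (Fx - g i) ^ 2 = (Fx - g i0) ^ 2 := by
    apply Finset.sum_eq_single i0
    · intro i _ hi
      have h2 : Fx ≤ g i := by
        rw [hFx, hi0]
        exact Finset.le_sup' x (Finset.mem_erase.2 ⟨Ne.symm hi, Finset.mem_univ i0⟩)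
      have h3 : g i = Fx := le_antisymm (hgle i) h2
      simp [h3]
    · intro h; exact absurd (Finset.mem_univ i0) h
  rw [hsum]
  have h1 : 0 ≤ Fx - g i0 := sub_nonneg.2 (hgle i0)
  have h2 : Fx - g i0 ≤ Fx - Gx := by linarith [hGle i0]
  nlinarith

private lemma measurable_inf'_fin {n : ℕ} {δ : Type*} [MeasurableSpace δ]
    (hne : (Finset.univ : Finset (Fin n)).Nonempty) {f : Fin n → δ → ℝ}
    (hf : ∀ i, Measurable (f i)) :
    Measurable (Finset.univ.inf' hne f) :=
  Finset.inf'_induction hne _ (fun _f hf2 _g hg => hf2.inf hg) fun i _ => hf i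

/-- Let `Y_1, …, Y_n` (`n ≥ 2`) be i.i.d. square-integrable real random
variables with largest and second largest order statistics `M = Y_{n,n}` and
`M2 = Y_{n-1,n}`. Then `E[M²] ≤ (E[M])² + E[(M - M2)²]`. -/
theorem stmt9 {Ω : Type*} [MeasureSpace Ω] [IsProbabilityMeasure (ℙ : Measure Ω)]
    (n : ℕ) (hn : 2 ≤ n) (Y : Fin n → Ω → ℝ)
    (hmeas : ∀ i, Measurable (Y i))
    (hindep : iIndepFun Y ℙ)
    (hident : ∀ i j, Measure.map (Y i) ℙ = Measure.map (Y j) ℙ)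
    (hL2 : ∀ i, MemLp (Y i) 2 ℙ)
    (M M2 : Ω → ℝ)
    (hM : ∀ ω, M ω = ⨆ i, Y i ω)
    (hM2 : ∀ ω, M2 ω =
      Finset.univ.inf'
        (Finset.univ_nonempty_iff.mpr (Fin.pos_iff_nonempty.mp (by omega)))
        (fun i => (Finset.univ.erase i).sup'
          (Finset.card_pos.mp (by
            rw [Finset.card_erase_of_mem (Finset.mem_univ i), Finset.card_univ,
              Fintype.card_fin]
            omega))
          (fun j => Y j ω)))
    (hMint : Integrable M ℙ)
    (hM2int : Integrable (fun ω => M ω ^ 2) ℙ)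
    (hdiffint : Integrable (fun ω => (M ω - M2 ω) ^ 2) ℙ) :
    ∫ ω, M ω ^ 2 ∂ℙ ≤ (∫ ω, M ω ∂ℙ) ^ 2 + ∫ ω, (M ω - M2 ω) ^ 2 ∂ℙ := by
  have hnpos : 0 < n := by omega
  haveI : Nonempty (Fin n) := Fin.pos_iff_nonempty.mp hnpos
  have hne : (Finset.univ : Finset (Fin n)).Nonempty := Finset.univ_nonempty
  have hee : ∀ i : Fin n, ((Finset.univ : Finset (Fin n)).erase i).Nonempty := by
    intro i
    apply Finset.card_pos.mp
    rw [Finset.card_erase_of_mem (Finset.mem_univ i), Finset.card_univ, Fintype.card_fin]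
    omega
  set φ : Ω → (Fin n → ℝ) := fun ω i => Y i ω with hφdef
  have hφmeas : Measurable φ := measurable_pi_lambda _ hmeas
  set ν : Fin n → Measure ℝ := fun i => Measure.map (Y i) ℙ with hνdef
  haveI hνprob : ∀ i, IsProbabilityMeasure (ν i) := fun i =>
    Measure.isProbabilityMeasure_map (hmeas i).aemeasurable
  have hmap : Measure.map φ ℙ = Measure.pi ν := by
    refine (Measure.pi_eq ?_).symm
    intro s hs
    rw [Measure.map_apply hφmeas (MeasurableSet.univ_pi hs)]
    have hpre : φ ⁻¹' Set.pi Set.univ s = ⋂ i, Y i ⁻¹' s i := by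
      ext ω; simp [Set.mem_pi, hφdef]
    rw [hpre, hindep.meas_iInter fun i => ⟨s i, hs i, rfl⟩]
    exact Finset.prod_congr rfl fun i _ => (Measure.map_apply (hmeas i) (hs i)).symm
  set f : (Fin n → ℝ) → ℝ := fun x => Finset.univ.sup' hne x with hfdef
  set g : Fin n → (Fin n → ℝ) → ℝ := fun i x => (Finset.univ.erase i).sup' (hee i) x with hgdef
  set G : (Fin n → ℝ) → ℝ := fun x => Finset.univ.inf' hne (fun i => g i x) with hGdef
  have hMφ : ∀ ω, M ω = f (φ ω) := by
    intro ω
    rw [hM ω]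
    exact (Finset.sup'_univ_eq_ciSup _).symm
  have hM2φ : ∀ ω, M2 ω = G (φ ω) := fun ω => hM2 ω
  have hfmeas : Measurable f := by
    have h1 := Finset.measurable_sup' (f := fun i (x : Fin n → ℝ) => x i) hne
      (fun i _ => measurable_pi_apply i)
    have h2 : f = Finset.univ.sup' hne (fun i (x : Fin n → ℝ) => x i) := by
      funext x; rw [Finset.sup'_apply]
    rw [h2]; exact h1
  have hgmeas : ∀ i, Measurable (g i) := by
    intro i
    have h1 := Finset.measurable_sup' (f := fun j (x : Fin n → ℝ) => x j) (hee i)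
      (fun j _ => measurable_pi_apply j)
    have h2 : g i = (Finset.univ.erase i).sup' (hee i) (fun j (x : Fin n → ℝ) => x j) := by
      funext x; rw [Finset.sup'_apply]
    rw [h2]; exact h1
  have hGmeas : Measurable G := by
    have h1 := measurable_inf'_fin hne hgmeas
    have h2 : G = Finset.univ.inf' hne g := by
      funext x; rw [Finset.inf'_apply]
    rw [h2]; exact h1
  have hgupd : ∀ (i : Fin n) (x : Fin n → ℝ) (t : ℝ), g i (Function.update x i t) = g i x := by
    intro i x t
    refine Finset.sup'_congr (hee i) rfl fun j hj => ?_
    exact Function.update_of_ne (Finset.mem_erase.1 hj).1 t x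
  have hgleF : ∀ i x, g i x ≤ f x := fun i x =>
    Finset.sup'_le _ _ fun j _ => Finset.le_sup' x (Finset.mem_univ j)
  have hGleg : ∀ i x, G x ≤ g i x := fun i x =>
    Finset.inf'_le _ (Finset.mem_univ i)
  have hf2asm : AEStronglyMeasurable (fun x => f x ^ 2) (Measure.map φ ℙ) :=
    (hfmeas.pow_const 2).aestronglyMeasurable
  have hfasm : AEStronglyMeasurable f (Measure.map φ ℙ) := hfmeas.aestronglyMeasurable
  have hdasm : AEStronglyMeasurable (fun x => (f x - G x) ^ 2) (Measure.map φ ℙ) :=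
    ((hfmeas.sub hGmeas).pow_const 2).aestronglyMeasurable
  have hf2pi : Integrable (fun x => f x ^ 2) (Measure.pi ν) := by
    rw [← hmap]
    refine (integrable_map_measure hf2asm hφmeas.aemeasurable).2 ?_
    have h1 : ((fun x => f x ^ 2) ∘ φ) = fun ω => M ω ^ 2 := by
      funext ω; simp only [Function.comp_apply]; rw [← hMφ ω]
    rw [h1]; exact hM2int
  have hdiff2pi : Integrable (fun x => (f x - G x) ^ 2) (Measure.pi ν) := by
    rw [← hmap]
    refine (integrable_map_measure hdasm hφmeas.aemeasurable).2 ?_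
    have h1 : ((fun x => (f x - G x) ^ 2) ∘ φ) = fun ω => (M ω - M2 ω) ^ 2 := by
      funext ω; simp only [Function.comp_apply]; rw [← hMφ ω, ← hM2φ ω]
    rw [h1]; exact hdiffint
  have hfg2pi : ∀ i, Integrable (fun x => (f x - g i x) ^ 2) (Measure.pi ν) := by
    intro i
    refine hdiff2pi.mono (((hfmeas.sub (hgmeas i)).pow_const 2).aestronglyMeasurable)
      (ae_of_all _ fun x => ?_)
    rw [Real.norm_eq_abs, Real.norm_eq_abs, abs_of_nonneg (sq_nonneg _),
      abs_of_nonneg (sq_nonneg _)]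
    have h1 : 0 ≤ f x - g i x := sub_nonneg.2 (hgleF i x)
    have h2 : f x - g i x ≤ f x - G x := by linarith [hGleg i x]
    nlinarith
  have key := tensorization n ν hνprob f g hfmeas hgmeas hgupd hf2pi hfg2pi
  have hsum_le : ∑ i : Fin n, ∫ x, (f x - g i x) ^ 2 ∂Measure.pi ν ≤
      ∫ x, (f x - G x) ^ 2 ∂Measure.pi ν := by
    rw [← integral_finset_sum _ fun i _ => hfg2pi i]
    refine integral_mono (integrable_finset_sum _ fun i _ => hfg2pi i) hdiff2pi fun x => ?_
    exact key_pointwise x hne hee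
  have A1 : ∫ x, f x ^ 2 ∂Measure.pi ν = ∫ ω, M ω ^ 2 ∂ℙ := by
    rw [← hmap, integral_map hφmeas.aemeasurable hf2asm]
    exact integral_congr_ae (ae_of_all _ fun ω => by
      show f (φ ω) ^ 2 = M ω ^ 2
      rw [hMφ ω])
  have A2 : ∫ x, f x ∂Measure.pi ν = ∫ ω, M ω ∂ℙ := by
    rw [← hmap, integral_map hφmeas.aemeasurable hfasm]
    exact integral_congr_ae (ae_of_all _ fun ω => (hMφ ω).symm)
  have A3 : ∫ x, (f x - G x) ^ 2 ∂Measure.pi ν = ∫ ω, (M ω - M2 ω) ^ 2 ∂ℙ := by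
    rw [← hmap, integral_map hφmeas.aemeasurable hdasm]
    exact integral_congr_ae (ae_of_all _ fun ω => by
      show (f (φ ω) - G (φ ω)) ^ 2 = (M ω - M2 ω) ^ 2
      rw [hMφ ω, hM2φ ω])
  rw [← A1, ← A2, ← A3]
  linarith [key, hsum_le]
end

section
/- Let X_1,…,X_n be independent random variables and Z = f(X_1,…,X_n) square-integrable, and for each i let Z_i be a square-integrable function of (X_j)_{j≠i}. Then Var(Z) ≤ Σ_{i=1}^n E[(Z − Z_i)²]. -/
open MeasureTheory ProbabilityTheory Real

open scoped Classical

namespace EfronStein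

variable {n : ℕ} (μ : Fin n → Measure ℝ) [∀ i, IsProbabilityMeasure (μ i)]

/-- Combine: use `q.2` on coordinates satisfying `p`, `q.1` elsewhere. -/
noncomputable def C (p : Fin n → Prop) (q : (Fin n → ℝ) × (Fin n → ℝ)) : Fin n → ℝ :=
  fun j => if p j then q.2 j else q.1 j

lemma measurable_C (p : Fin n → Prop) : Measurable (C (n := n) p) := by
  apply measurable_pi_iff.2
  intro j
  by_cases h : p j
  · simpa [C, h] using (measurable_snd.comp measurable_id).eval
  · simpa [C, h] using (measurable_fst.comp measurable_id).eval

/-- The combine map is measure preserving from `m × m` to `m`. -/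
lemma measurePreserving_C (p : Fin n → Prop) :
    MeasurePreserving (C (n := n) p)
      ((Measure.pi μ).prod (Measure.pi μ)) (Measure.pi μ) := by
  have h1 := (measurePreserving_arrowProdEquivProdArrow ℝ ℝ (Fin n) μ μ).symm
  have h2 : MeasurePreserving
      (fun v : Fin n → ℝ × ℝ => fun j => if p j then (v j).2 else (v j).1)
      (Measure.pi fun i => (μ i).prod (μ i)) (Measure.pi μ) := by
    have := measurePreserving_pi (fun i => (μ i).prod (μ i)) μ
      (f := fun i (r : ℝ × ℝ) => if p i then r.2 else r.1) ?_
    · exact this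
    intro i
    by_cases h : p i
    · simpa [h] using
        (⟨measurable_snd, by simp⟩ : MeasurePreserving Prod.snd ((μ i).prod (μ i)) (μ i))
    · simpa [h] using
        (⟨measurable_fst, by simp⟩ : MeasurePreserving Prod.fst ((μ i).prod (μ i)) (μ i))
  have : C (n := n) p = (fun v : Fin n → ℝ × ℝ => fun j => if p j then (v j).2 else (v j).1)
      ∘ (MeasurableEquiv.arrowProdEquivProdArrow ℝ ℝ (Fin n)).symm := by
    funext q j
    simp [C, MeasurableEquiv.arrowProdEquivProdArrow, Equiv.arrowProdEquivProdArrow]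
  rw [this]
  exact h2.comp h1


/-- Integrate out the coordinates in `p`. -/
noncomputable def E (p : Fin n → Prop) (f : (Fin n → ℝ) → ℝ) (x : Fin n → ℝ) : ℝ :=
  ∫ y, f (C p (x, y)) ∂(Measure.pi μ)

lemma E_congr {p q : Fin n → Prop} (h : ∀ j, p j ↔ q j) (f : (Fin n → ℝ) → ℝ) :
    E μ p f = E μ q f := by
  have hC : C (n := n) p = C q := by
    funext z j; simp only [C]; rw [if_congr (h j) rfl rfl]
  funext x
  simp only [E]
  rw [hC]

lemma stronglyMeasurable_E (p : Fin n → Prop) {f : (Fin n → ℝ) → ℝ} (hf : Measurable f) :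
    StronglyMeasurable (E μ p f) :=
  (hf.comp (measurable_C p)).stronglyMeasurable.integral_prod_right'

lemma memℒp_comp_C (p : Fin n → Prop) {f : (Fin n → ℝ) → ℝ} {r : ENNReal}
    (hf : MemLp f r (Measure.pi μ)) :
    MemLp (fun q => f (C p q)) r ((Measure.pi μ).prod (Measure.pi μ)) := by
  have hmap := (measurePreserving_C μ p).map_eq
  have := (memLp_map_measure_iff (f := C p) (g := f)
      (by rw [hmap]; exact hf.aestronglyMeasurable)
      (measurable_C p).aemeasurable).1 (by rw [hmap]; exact hf)
  exact this

lemma integrable_comp_C (p : Fin n → Prop) {f : (Fin n → ℝ) → ℝ}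
    (hf : Integrable f (Measure.pi μ)) :
    Integrable (fun q => f (C p q)) ((Measure.pi μ).prod (Measure.pi μ)) := by
  rw [← memLp_one_iff_integrable] at hf ⊢
  exact memℒp_comp_C μ p hf

lemma integral_E (p : Fin n → Prop) {f : (Fin n → ℝ) → ℝ}
    (hf : Integrable f (Measure.pi μ)) :
    ∫ x, E μ p f x ∂(Measure.pi μ) = ∫ x, f x ∂(Measure.pi μ) := by
  have h1 := integrable_comp_C μ p hf
  have h2 : ∫ x, E μ p f x ∂(Measure.pi μ)
      = ∫ q, f (C p q) ∂((Measure.pi μ).prod (Measure.pi μ)) := by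
    simpa [E] using integral_integral (f := fun x y => f (C p (x, y))) h1
  have hsm : AEStronglyMeasurable f
      (Measure.map (C (n := n) p) ((Measure.pi μ).prod (Measure.pi μ))) := by
    rw [(measurePreserving_C μ p).map_eq]; exact hf.aestronglyMeasurable
  rw [h2, ← integral_map (measurable_C p).aemeasurable hsm,
    (measurePreserving_C μ p).map_eq]

lemma integrable_E (p : Fin n → Prop) {f : (Fin n → ℝ) → ℝ}
    (hf : Integrable f (Measure.pi μ)) :
    Integrable (E μ p f) (Measure.pi μ) :=
  (integrable_comp_C μ p hf).integral_prod_left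

lemma ae_integrable_slice (p : Fin n → Prop) {f : (Fin n → ℝ) → ℝ}
    (hf : Integrable f (Measure.pi μ)) :
    ∀ᵐ x ∂(Measure.pi μ), Integrable (fun y => f (C p (x, y))) (Measure.pi μ) :=
  (integrable_comp_C μ p hf).prod_right_ae

lemma E_sub (p : Fin n → Prop) {f g : (Fin n → ℝ) → ℝ}
    (hf : Integrable f (Measure.pi μ)) (hg : Integrable g (Measure.pi μ)) :
    ∀ᵐ x ∂(Measure.pi μ), E μ p (fun w => f w - g w) x = E μ p f x - E μ p g x := by
  filter_upwards [ae_integrable_slice μ p hf, ae_integrable_slice μ p hg] with x h1 h2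
  simp only [E]
  exact integral_sub h1 h2

lemma C_comp (p q : Fin n → Prop) (x y z : Fin n → ℝ) :
    C q (C p (x, y), z) = C (fun j => p j ∨ q j) (x, C q (y, z)) := by
  funext j
  by_cases hq : q j
  · simp [C, hq]
  · by_cases hp : p j <;> simp [C, hp, hq]

lemma C_comp_subset {p q : Fin n → Prop} (h : ∀ j, q j → p j) (x y z : Fin n → ℝ) :
    C p (C q (x, y), z) = C p (x, z) := by
  funext j
  by_cases hp : p j
  · simp [C, hp]
  · have hq : ¬ q j := fun hq => hp (h j hq)
    simp [C, hp, hq]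

/-- Invariance: `E p f` does not depend on the coordinates in `q ⊆ p`. -/
lemma E_invariant {p q : Fin n → Prop} (h : ∀ j, q j → p j) (f : (Fin n → ℝ) → ℝ)
    (x y : Fin n → ℝ) : E μ p f (C q (x, y)) = E μ p f x := by
  simp only [E, C_comp_subset h]

/-- Tower property, almost everywhere. -/
lemma E_tower (p q : Fin n → Prop) {f : (Fin n → ℝ) → ℝ} (hfm : Measurable f)
    (hf : Integrable f (Measure.pi μ)) :
    ∀ᵐ x ∂(Measure.pi μ), E μ p (E μ q f) x = E μ (fun j => p j ∨ q j) f x := by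
  filter_upwards [ae_integrable_slice μ (fun j => p j ∨ q j) hf] with x hx
  have hFm : Measurable fun w => f (C (fun j => p j ∨ q j) (x, w)) :=
    hfm.comp ((measurable_C _).comp measurable_prodMk_left)
  have hint : Integrable (fun r : (Fin n → ℝ) × (Fin n → ℝ) =>
      f (C (fun j => p j ∨ q j) (x, C q r))) ((Measure.pi μ).prod (Measure.pi μ)) := by
    have := (integrable_map_measure (f := C q)
      (g := fun w => f (C (fun j => p j ∨ q j) (x, w)))
      (by rw [(measurePreserving_C μ q).map_eq]; exact hFm.aestronglyMeasurable)
      (measurable_C q).aemeasurable).1 (by rw [(measurePreserving_C μ q).map_eq]; exact hx)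
    exact this
  calc E μ p (E μ q f) x
      = ∫ y, ∫ z, f (C q (C p (x, y), z)) ∂(Measure.pi μ) ∂(Measure.pi μ) := rfl
    _ = ∫ y, ∫ z, f (C (fun j => p j ∨ q j) (x, C q (y, z)))
          ∂(Measure.pi μ) ∂(Measure.pi μ) := by simp only [C_comp]
    _ = ∫ r, f (C (fun j => p j ∨ q j) (x, C q r))
          ∂((Measure.pi μ).prod (Measure.pi μ)) :=
        integral_integral (f := fun y z => f (C (fun j => p j ∨ q j) (x, C q (y, z)))) hint
    _ = ∫ w, f (C (fun j => p j ∨ q j) (x, w)) ∂(Measure.pi μ) := by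
        have hsm : AEStronglyMeasurable (fun w => f (C (fun j => p j ∨ q j) (x, w)))
            (Measure.map (C (n := n) q) ((Measure.pi μ).prod (Measure.pi μ))) := by
          rw [(measurePreserving_C μ q).map_eq]; exact hFm.aestronglyMeasurable
        rw [← integral_map (measurable_C q).aemeasurable hsm,
          (measurePreserving_C μ q).map_eq]
    _ = E μ (fun j => p j ∨ q j) f x := rfl


lemma ae_memℒp_slice (p : Fin n → Prop) {f : (Fin n → ℝ) → ℝ} (hfm : Measurable f)
    (hf : MemLp f 2 (Measure.pi μ)) :
    ∀ᵐ x ∂(Measure.pi μ), MemLp (fun y => f (C p (x, y))) 2 (Measure.pi μ) := by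
  have h2 : Integrable (fun q => (f (C p q)) ^ 2) ((Measure.pi μ).prod (Measure.pi μ)) := by
    have := (memℒp_comp_C μ p hf).integrable_sq
    simpa using this
  filter_upwards [h2.prod_right_ae] with x hx
  refine (memLp_two_iff_integrable_sq ?_).2 hx
  exact (hfm.comp ((measurable_C p).comp measurable_prodMk_left)).aestronglyMeasurable

/-- Conditional Cauchy-Schwarz / Jensen: `(E p f)² ≤ E p (f²)` a.e. -/
lemma sq_E_le (p : Fin n → Prop) {f : (Fin n → ℝ) → ℝ} (hfm : Measurable f)
    (hf : MemLp f 2 (Measure.pi μ)) :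
    ∀ᵐ x ∂(Measure.pi μ), (E μ p f x) ^ 2 ≤ E μ p (fun w => f w ^ 2) x := by
  filter_upwards [ae_memℒp_slice μ p hfm hf] with x hx
  have h := variance_nonneg (fun y => f (C p (x, y))) (Measure.pi μ)
  rw [variance_eq_sub hx] at h
  have : (∫ y, f (C p (x, y)) ∂(Measure.pi μ)) ^ 2
      ≤ ∫ y, (f (C p (x, y))) ^ 2 ∂(Measure.pi μ) := by
    have h1 : (Measure.pi μ)[(fun y => f (C p (x, y))) ^ 2]
        = ∫ y, (f (C p (x, y))) ^ 2 ∂(Measure.pi μ) := by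
      congr 1
    have h2 : (Measure.pi μ)[fun y => f (C p (x, y))]
        = ∫ y, f (C p (x, y)) ∂(Measure.pi μ) := rfl
    nlinarith [h]
  exact this

lemma memℒp_E (p : Fin n → Prop) {f : (Fin n → ℝ) → ℝ} (hfm : Measurable f)
    (hf : MemLp f 2 (Measure.pi μ)) :
    MemLp (E μ p f) 2 (Measure.pi μ) := by
  refine (memLp_two_iff_integrable_sq
    (stronglyMeasurable_E μ p hfm).aestronglyMeasurable).2 ?_
  have hsq : Integrable (E μ p (fun w => f w ^ 2)) (Measure.pi μ) :=
    integrable_E μ p hf.integrable_sq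
  refine hsq.mono' ?_ ?_
  · exact (((stronglyMeasurable_E μ p hfm).aestronglyMeasurable).pow 2)
  · filter_upwards [sq_E_le μ p hfm hf] with x hx
    have h0 : (0:ℝ) ≤ E μ p (fun w => f w ^ 2) x := le_trans (sq_nonneg _) hx
    simpa [abs_of_nonneg (sq_nonneg (E μ p f x)), Real.norm_eq_abs] using hx

lemma integrable_mul_of_memℒp2 {m : Measure (Fin n → ℝ)} {f g : (Fin n → ℝ) → ℝ}
    (hf : MemLp f 2 m) (hg : MemLp g 2 m) :
    Integrable (fun x => f x * g x) m := by
  have hint : Integrable (fun x => (f x ^ 2 + g x ^ 2) / 2) m :=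
    (hf.integrable_sq.add hg.integrable_sq).div_const 2
  refine hint.mono' (hf.aestronglyMeasurable.mul hg.aestronglyMeasurable) ?_
  filter_upwards with x
  rw [Real.norm_eq_abs, abs_mul]
  nlinarith [sq_nonneg (|f x| - |g x|), sq_abs (f x), sq_abs (g x), abs_nonneg (f x),
    abs_nonneg (g x)]

/-- The mean minimizes the expected squared deviation. -/
lemma integral_sq_dev_min {m : Measure (Fin n → ℝ)} [IsProbabilityMeasure m]
    {h : (Fin n → ℝ) → ℝ} (hh : MemLp h 2 m) (c : ℝ) :
    ∫ y, (h y - ∫ z, h z ∂m) ^ 2 ∂m ≤ ∫ y, (h y - c) ^ 2 ∂m := by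
  set b := ∫ z, h z ∂m with hb
  have hhb : MemLp (fun y => h y - b) 2 m := hh.sub (memLp_const b)
  have hhc : MemLp (fun y => h y - c) 2 m := hh.sub (memLp_const c)
  have hib : Integrable (fun y => (h y - b) ^ 2) m := hhb.integrable_sq
  have hic : Integrable (fun y => (h y - c) ^ 2) m := hhc.integrable_sq
  have hi1 : Integrable h m := hh.integrable one_le_two
  have key : ∫ y, ((h y - c) ^ 2 - (h y - b) ^ 2) ∂m = (b - c) ^ 2 := by
    have hptw : ∀ y, (h y - c) ^ 2 - (h y - b) ^ 2 = (b - c) * (2 * h y - b - c) := by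
      intro y; ring
    simp_rw [hptw]
    rw [integral_const_mul]
    have h5 : ∫ y, (2 * h y - b - c) ∂m = 2 * b - b - c := by
      have h4 : (fun y => 2 * h y - b - c) = fun y => 2 * h y - (b + c) := by
        funext y; ring
      rw [h4, integral_sub (hi1.const_mul 2) (integrable_const _), integral_const_mul,
        integral_const]
      simp
      ring
    rw [h5]; ring
  have := integral_sub hic hib
  nlinarith [key, this.symm, sq_nonneg (b - c)]

end EfronStein


open EfronStein in
/-- **Efron–Stein / sub-additivity of variance.** Let `X_1, …, X_n` be
independent random variables (modelled by a product probability measure on `Fin n → ℝ`),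
let `Z` be a square-integrable function of `(X_1, …, X_n)`, and for each `i` let `Z_i`
be a square-integrable function not depending on the `i`-th coordinate. Then
`Var(Z) ≤ ∑_i E[(Z - Z_i)²]`. -/
theorem stmt11 (n : ℕ) (μ : Fin n → Measure ℝ) [∀ i, IsProbabilityMeasure (μ i)]
    (Z : (Fin n → ℝ) → ℝ) (Zi : Fin n → (Fin n → ℝ) → ℝ)
    (hZmeas : Measurable Z) (hZimeas : ∀ i, Measurable (Zi i))
    (hZ2 : MemLp Z 2 (Measure.pi μ))
    (hZi2 : ∀ i, MemLp (Zi i) 2 (Measure.pi μ))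
    (hZi_indep : ∀ i (x y : Fin n → ℝ), (∀ j, j ≠ i → x j = y j) → Zi i x = Zi i y) :
    variance Z (Measure.pi μ)
      ≤ ∑ i, ∫ x, (Z x - Zi i x) ^ 2 ∂(Measure.pi μ) := by
  classical
  set m := Measure.pi μ with hm
  set g : ℕ → (Fin n → ℝ) → ℝ := fun k => E μ (fun j => k ≤ (j : ℕ)) Z with hg
  set D : ℕ → (Fin n → ℝ) → ℝ := fun k x => g (k + 1) x - g k x with hD
  have hZint : Integrable Z m := hZ2.integrable one_le_two
  have hg2 : ∀ k, MemLp (g k) 2 m := fun k => memℒp_E μ _ hZmeas hZ2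
  have hgint : ∀ k, Integrable (g k) m := fun k => (hg2 k).integrable one_le_two
  have hD2 : ∀ k, MemLp (D k) 2 m := fun k => (hg2 (k + 1)).sub (hg2 k)
  have hDmul : ∀ k l, Integrable (fun x => D k x * D l x) m := fun k l =>
    integrable_mul_of_memℒp2 (hD2 k) (hD2 l)
  -- endpoint values
  have hgn : ∀ x, g n x = Z x := by
    intro x
    have hC : ∀ y, C (fun j : Fin n => n ≤ (j : ℕ)) (x, y) = x := by
      intro y; funext j
      exact if_neg (by exact Nat.not_le.2 j.isLt)
    simp only [hg, E, hC]
    simp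
  have hg0 : ∀ x, g 0 x = ∫ z, Z z ∂m := by
    intro x
    have hC : ∀ y : Fin n → ℝ, C (fun j : Fin n => 0 ≤ (j : ℕ)) (x, y) = y := by
      intro y; funext j
      exact if_pos (Nat.zero_le _)
    simp only [hg, E, hC, hm]
  -- telescoping
  have htel : ∀ x, Z x - (∫ z, Z z ∂m) = ∑ k ∈ Finset.range n, D k x := by
    intro x
    rw [← hgn x, ← hg0 x]
    exact (Finset.sum_range_sub (fun k => g k x) n).symm
  have hvar : variance Z m = ∫ x, (∑ k ∈ Finset.range n, D k x) ^ 2 ∂m := by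
    rw [variance_eq_integral hZ2.aemeasurable]
    refine integral_congr_ae (Filter.Eventually.of_forall fun x => ?_)
    simp only [Pi.pow_apply, Pi.sub_apply]
    rw [show Z x - (fun _ => m[Z]) x = ∑ k ∈ Finset.range n, D k x from htel x]
  -- expand the square
  have hsum : ∫ x, (∑ k ∈ Finset.range n, D k x) ^ 2 ∂m
      = ∑ k ∈ Finset.range n, ∑ l ∈ Finset.range n, ∫ x, D k x * D l x ∂m := by
    have hexp : ∀ x : Fin n → ℝ, (∑ k ∈ Finset.range n, D k x) ^ 2
        = ∑ k ∈ Finset.range n, ∑ l ∈ Finset.range n, D k x * D l x := by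
      intro x; rw [sq, Finset.sum_mul_sum]
    simp_rw [hexp]
    rw [integral_finset_sum _ (fun k _ => integrable_finset_sum _ (fun l _ => hDmul k l))]
    exact Finset.sum_congr rfl fun k _ => integral_finset_sum _ (fun l _ => hDmul k l)
  -- orthogonality
  have horth : ∀ k l : ℕ, k < l → ∫ x, D k x * D l x ∂m = 0 := by
    intro k l hkl
    set p := fun j : Fin n => l ≤ (j : ℕ) with hp
    have hEzero : ∀ᵐ x ∂m, E μ p (D l) x = 0 := by
      have h1 := E_sub μ p (hgint (l + 1)) (hgint l)
      have h2 := E_tower μ p (fun j => l + 1 ≤ (j : ℕ)) hZmeas hZint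
      have h3 := E_tower μ p p hZmeas hZint
      have e2 : E μ (fun j => p j ∨ l + 1 ≤ (j : ℕ)) Z = E μ p Z :=
        E_congr μ (fun j => by simp only [hp]; omega) Z
      have e3 : E μ (fun j => p j ∨ p j) Z = E μ p Z :=
        E_congr μ (fun j => by simp only [hp]; omega) Z
      filter_upwards [h1, h2, h3] with x hx1 hx2 hx3
      simp only [hD]
      rw [hx1]
      simp only [hg]
      rw [hx2, hx3, e2, e3, sub_self]
    have hpt : ∀ x, E μ p (fun w => D k w * D l w) x = D k x * E μ p (D l) x := by
      intro x
      have hDk : ∀ y, D k (C p (x, y)) = D k x := by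
        intro y
        simp only [hD, hg]
        rw [E_invariant μ (fun j hj => by simp only [hp] at hj ⊢; omega) Z x y,
          E_invariant μ (fun j hj => by simp only [hp] at hj ⊢; omega) Z x y]
      calc E μ p (fun w => D k w * D l w) x
          = ∫ y, D k (C p (x, y)) * D l (C p (x, y)) ∂m := rfl
        _ = ∫ y, D k x * D l (C p (x, y)) ∂m := by simp_rw [hDk]
        _ = D k x * ∫ y, D l (C p (x, y)) ∂m := integral_const_mul _ _
        _ = D k x * E μ p (D l) x := rfl
    calc ∫ x, D k x * D l x ∂m
        = ∫ x, E μ p (fun w => D k w * D l w) x ∂m := (integral_E μ p (hDmul k l)).symm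
      _ = ∫ x, D k x * E μ p (D l) x ∂m :=
          integral_congr_ae (Filter.Eventually.of_forall fun x => by rw [hpt x])
      _ = 0 := by
          rw [← integral_zero (Fin n → ℝ) ℝ (μ := m)]
          refine integral_congr_ae ?_
          filter_upwards [hEzero] with x hx
          rw [hx, mul_zero]
  -- diagonal bound
  have hdiag : ∀ k (hk : k < n),
      ∫ x, D k x * D k x ∂m ≤ ∫ x, (Z x - Zi ⟨k, hk⟩ x) ^ 2 ∂m := by
    intro k hk
    set i : Fin n := ⟨k, hk⟩ with hi
    set pe := fun j : Fin n => j = i with hpe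
    set p1 := fun j : Fin n => k + 1 ≤ (j : ℕ) with hp1
    have hEpeZ_meas : Measurable (E μ pe Z) := (stronglyMeasurable_E μ pe hZmeas).measurable
    have hEpeZ_2 : MemLp (E μ pe Z) 2 m := memℒp_E μ pe hZmeas hZ2
    set f0 : (Fin n → ℝ) → ℝ := fun w => Z w - E μ pe Z w with hf0
    have hf0m : Measurable f0 := hZmeas.sub hEpeZ_meas
    have hf02 : MemLp f0 2 m := hZ2.sub hEpeZ_2
    have hD_eq : ∀ᵐ x ∂m, D k x = E μ p1 f0 x := by
      have h1 := E_sub μ p1 hZint (integrable_E μ pe hZint)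
      have h2 := E_tower μ p1 pe hZmeas hZint
      have e : E μ (fun j => p1 j ∨ pe j) Z = E μ (fun j => k ≤ (j : ℕ)) Z := by
        refine E_congr μ (fun j => ?_) Z
        simp only [hp1, hpe]
        constructor
        · rintro (h | rfl)
          · omega
          · simp [hi]
        · intro h
          by_cases hjk : (j : ℕ) = k
          · right; exact Fin.ext (by simp [hi, hjk])
          · left; omega
      filter_upwards [h1, h2] with x hx1 hx2
      simp only [hD, hg]
      rw [show E μ p1 f0 x = E μ p1 (fun w => Z w - E μ pe Z w) x from rfl, hx1, hx2, e]
    have hJ := sq_E_le μ p1 hf0m hf02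
    have step3 : ∫ x, D k x * D k x ∂m ≤ ∫ x, f0 x ^ 2 ∂m := by
      have hint1 : Integrable (fun x => D k x * D k x) m := hDmul k k
      have hint2 : Integrable (E μ p1 fun w => f0 w ^ 2) m :=
        integrable_E μ p1 hf02.integrable_sq
      have hmono := integral_mono_ae hint1 hint2 ?_
      · rwa [integral_E μ p1 hf02.integrable_sq] at hmono
      · filter_upwards [hD_eq, hJ] with x h1 h2
        calc D k x * D k x = (E μ p1 f0 x) ^ 2 := by rw [h1, sq]
          _ ≤ E μ p1 (fun w => f0 w ^ 2) x := h2
    have hZZi2 : MemLp (fun w => Z w - Zi i w) 2 m := hZ2.sub (hZi2 i)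
    have hae : ∀ᵐ x ∂m, E μ pe (fun w => f0 w ^ 2) x
        ≤ E μ pe (fun w => (Z w - Zi i w) ^ 2) x := by
      filter_upwards [ae_memℒp_slice μ pe hZmeas hZ2] with x hx
      have hinv : ∀ y, E μ pe Z (C pe (x, y)) = E μ pe Z x := fun y =>
        E_invariant μ (fun j hj => hj) Z x y
      have hZi_inv : ∀ y, Zi i (C pe (x, y)) = Zi i x := by
        intro y
        refine hZi_indep i _ x (fun j hj => ?_)
        simp only [C]
        rw [if_neg (by simpa [hpe] using hj)]
      calc E μ pe (fun w => f0 w ^ 2) x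
          = ∫ y, (Z (C pe (x, y)) - E μ pe Z x) ^ 2 ∂m := by
            refine integral_congr_ae (Filter.Eventually.of_forall fun y => ?_)
            simp only [hf0, hinv y]
        _ = ∫ y, (Z (C pe (x, y)) - ∫ z, Z (C pe (x, z)) ∂m) ^ 2 ∂m := rfl
        _ ≤ ∫ y, (Z (C pe (x, y)) - Zi i x) ^ 2 ∂m := integral_sq_dev_min hx (Zi i x)
        _ = ∫ y, (Z (C pe (x, y)) - Zi i (C pe (x, y))) ^ 2 ∂m := by simp_rw [hZi_inv]
        _ = E μ pe (fun w => (Z w - Zi i w) ^ 2) x := rfl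
    have step4 : ∫ x, f0 x ^ 2 ∂m ≤ ∫ x, (Z x - Zi i x) ^ 2 ∂m := by
      rw [← integral_E μ pe hf02.integrable_sq, ← integral_E μ pe hZZi2.integrable_sq]
      exact integral_mono_ae (integrable_E μ pe hf02.integrable_sq)
        (integrable_E μ pe hZZi2.integrable_sq) hae
    exact le_trans step3 step4
  -- assemble
  set W : ℕ → ℝ := fun k =>
    if h : k < n then ∫ x, (Z x - Zi ⟨k, h⟩ x) ^ 2 ∂m else 0 with hW
  have hRHS : ∑ i, ∫ x, (Z x - Zi i x) ^ 2 ∂m = ∑ k ∈ Finset.range n, W k := by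
    rw [← Fin.sum_univ_eq_sum_range W n]
    refine Finset.sum_congr rfl fun i _ => ?_
    simp only [hW, i.isLt, dif_pos, Fin.eta]
  calc variance Z m
      = ∑ k ∈ Finset.range n, ∑ l ∈ Finset.range n, ∫ x, D k x * D l x ∂m := by
        rw [hvar, hsum]
    _ = ∑ k ∈ Finset.range n, ∫ x, D k x * D k x ∂m := by
        refine Finset.sum_congr rfl fun k hk => ?_
        refine Finset.sum_eq_single_of_mem k hk fun l _ hlk => ?_
        rcases lt_or_gt_of_ne (Ne.symm hlk) with h | h
        · exact horth k l h
        · rw [show (fun x => D k x * D l x) = fun x => D l x * D k x from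
            funext fun x => mul_comm _ _]
          exact horth l k h
    _ ≤ ∑ k ∈ Finset.range n, W k := by
        refine Finset.sum_le_sum fun k hk => ?_
        have hkn : k < n := Finset.mem_range.1 hk
        simpa [hW, hkn] using hdiag k hkn
    _ = ∑ i, ∫ x, (Z x - Zi i x) ^ 2 ∂m := hRHS.symm
end

section
/- Let X_1,…,X_n be independent random variables, Z = f(X_1,…,X_n) positive, and Z_i positive functions of (X_j)_{j≠i}. Then E[Z ln Z] − E[Z] ln(E[Z]) ≤ Σ_{i=1}^n E[Z ln(Z/Z_i) − (Z − Z_i)]. -/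
open MeasureTheory ProbabilityTheory Real


lemma aux_mul_log_le {z w : ℝ} (hz : 0 < z) (hw : 0 < w) :
    z * Real.log w - z * Real.log z ≤ w - z := by
  have h : Real.log (w / z) ≤ w / z - 1 := Real.log_le_sub_one_of_pos (div_pos hw hz)
  have h2 : z * Real.log (w / z) ≤ z * (w / z - 1) :=
    mul_le_mul_of_nonneg_left h hz.le
  rw [Real.log_div hw.ne' hz.ne', mul_sub] at h2
  have h3 : z * (w / z - 1) = w - z := by field_simp
  linarith

lemma aux_sub_one_le_mul_log {x : ℝ} (hx : 0 ≤ x) : x - 1 ≤ x * Real.log x := by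
  rcases eq_or_lt_of_le hx with h | h
  · simp [← h]
  · have := aux_mul_log_le h one_pos
    simp only [Real.log_one, mul_zero] at this
    linarith

lemma aux_key {α β : Type*} [MeasurableSpace α] [MeasurableSpace β]
    (μ₀ : Measure α) (ν : Measure β) [IsProbabilityMeasure μ₀] [IsProbabilityMeasure ν]
    (Z : α × β → ℝ) (hZm : Measurable Z) (hZpos : ∀ p, 0 < Z p)
    (hZint : Integrable Z (μ₀.prod ν))
    (hZlog : Integrable (fun p => Z p * log (Z p)) (μ₀.prod ν))
    (c : β → ℝ) (hcpos : ∀ y, 0 < c y)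
    (hcint : Integrable (fun p : α × β => c p.2) (μ₀.prod ν))
    (hZlogc : Integrable (fun p => Z p * log (Z p / c p.2)) (μ₀.prod ν))
    (B : α → ℝ) (hB : Integrable B μ₀)
    (hent : ∀ᵐ t ∂μ₀, (∫ y, Z (t, y) * log (Z (t, y)) ∂ν)
        - (∫ y, Z (t, y) ∂ν) * log (∫ y, Z (t, y) ∂ν) ≤ B t) :
    (∫ p, Z p * log (Z p) ∂(μ₀.prod ν))
        - (∫ p, Z p ∂(μ₀.prod ν)) * log (∫ p, Z p ∂(μ₀.prod ν))
      ≤ (∫ t, B t ∂μ₀)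
        + ∫ p, (Z p * log (Z p / c p.2) - (Z p - c p.2)) ∂(μ₀.prod ν) := by
  set ρ := μ₀.prod ν with hρ
  set W : α → ℝ := fun t => ∫ y, Z (t, y) ∂ν with hW
  set h : α → ℝ := fun t => ∫ y, Z (t, y) * log (Z (t, y)) ∂ν with hh
  set G : α → ℝ := fun t => ∫ y, Z (t, y) * log (Z (t, y) / c y) ∂ν with hG
  have hWsm : StronglyMeasurable W := hZm.stronglyMeasurable.integral_prod_right'
  have hWm : Measurable W := hWsm.measurable
  have hWnn : ∀ t, 0 ≤ W t := fun t => integral_nonneg fun y => (hZpos _).le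
  have hhint : Integrable h μ₀ := hZlog.integral_prod_left
  have hWint : Integrable W μ₀ := hZint.integral_prod_left
  have hGint : Integrable G μ₀ := hZlogc.integral_prod_left
  have hcν : Integrable c ν := by
    rcases hcint.prod_right_ae.exists with ⟨t, ht⟩
    exact ht
  have haesec : ∀ᵐ t ∂μ₀, Integrable (fun y => Z (t, y)) ν ∧
      Integrable (fun y => Z (t, y) * log (Z (t, y))) ν ∧
      Integrable (fun y => Z (t, y) * log (Z (t, y) / c y)) ν := by
    filter_upwards [hZint.prod_right_ae, hZlog.prod_right_ae, hZlogc.prod_right_ae] with t h1 h2 h3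
    exact ⟨h1, h2, h3⟩
  have haeWpos : ∀ᵐ t ∂μ₀, 0 < W t := by
    filter_upwards [hZint.prod_right_ae] with t h1
    rw [hW]
    rw [integral_pos_iff_support_of_nonneg (fun y => (hZpos _).le) h1]
    have : Function.support (fun y => Z (t, y)) = Set.univ :=
      Set.eq_univ_of_forall fun y => (hZpos _).ne'
    rw [this]
    simp
  -- pointwise-in-t Jensen-type bound : W log W ≤ h
  have haeΦW_le : ∀ᵐ t ∂μ₀, W t * log (W t) ≤ h t := by
    filter_upwards [haesec, haeWpos] with t hsec hWp
    obtain ⟨h1, h2, -⟩ := hsec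
    have key : ∀ y, Z (t, y) * log (W t) - Z (t, y) * log (Z (t, y)) ≤ W t - Z (t, y) :=
      fun y => aux_mul_log_le (hZpos _) hWp
    have hf1 : Integrable (fun y => Z (t, y) * log (W t) - Z (t, y) * log (Z (t, y))) ν :=
      (h1.mul_const (log (W t))).sub h2
    have hg1 : Integrable (fun y => W t - Z (t, y)) ν := (integrable_const (W t)).sub h1
    have hle := integral_mono hf1 hg1 key
    rw [integral_sub (h1.mul_const _) h2, integral_sub (integrable_const _) h1,
      integral_mul_const, integral_const] at hle
    simp only [measure_univ, probReal_univ, ENNReal.toReal_one, smul_eq_mul, one_mul] at hle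
    rw [hh]
    linarith
  have hΦWint : Integrable (fun t => W t * log (W t)) μ₀ := by
    refine integrable_of_le_of_le (g₁ := fun t => W t - 1) (g₂ := h)
      ((hWm.mul (Real.measurable_log.comp hWm)).aestronglyMeasurable)
      (Filter.Eventually.of_forall fun t => aux_sub_one_le_mul_log (hWnn t))
      haeΦW_le (hWint.sub (integrable_const 1)) hhint
  set A := ∫ p, Z p ∂ρ with hA
  have hAW : A = ∫ t, W t ∂μ₀ := integral_prod _ hZint
  have hApos : 0 < A := by
    rw [hA, integral_pos_iff_support_of_nonneg (fun p => (hZpos _).le) hZint]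
    have : Function.support Z = Set.univ := Set.eq_univ_of_forall fun p => (hZpos _).ne'
    rw [this]
    simp
  set Cν := ∫ y, c y ∂ν with hCν
  have hCρ : ∫ p, c p.2 ∂ρ = Cν := by
    rw [hρ, integral_prod _ hcint]
    simp
    exact hCν.symm
  -- Gibbs step, inner integral
  have hgibbs : ∀ᵐ t ∂μ₀, W t * log (W t) - W t * log A ≤ G t - W t + W t / A * Cν := by
    filter_upwards [haesec, haeWpos] with t hsec hWp
    obtain ⟨h1, h2, h3⟩ := hsec
    have key : ∀ y, Z (t, y) * (log (W t) - log A)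
        ≤ Z (t, y) * log (Z (t, y) / c y) - Z (t, y) + W t / A * c y := by
      intro y
      have hwpos : 0 < c y * W t / A := div_pos (mul_pos (hcpos y) hWp) hApos
      have e1 := aux_mul_log_le (hZpos (t, y)) hwpos
      rw [Real.log_div (mul_pos (hcpos y) hWp).ne' hApos.ne',
        Real.log_mul (hcpos y).ne' hWp.ne'] at e1
      rw [Real.log_div (hZpos _).ne' (hcpos y).ne']
      ring_nf at e1 ⊢
      linarith [e1]
    have hf1 : Integrable (fun y => Z (t, y) * (log (W t) - log A)) ν :=
      h1.mul_const (log (W t) - log A)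
    have hg1 : Integrable
        (fun y => Z (t, y) * log (Z (t, y) / c y) - Z (t, y) + W t / A * c y) ν :=
      (h3.sub h1).add (hcν.const_mul (W t / A))
    have hs1 : Integrable (fun y => Z (t, y) * log (Z (t, y) / c y) - Z (t, y)) ν := h3.sub h1
    have hs2 : Integrable (fun y => W t / A * c y) ν := hcν.const_mul (W t / A)
    have hle := integral_mono hf1 hg1 key
    rw [integral_mul_const, integral_add hs1 hs2,
      integral_sub h3 h1, integral_const_mul] at hle
    have hle' : W t * (log (W t) - log A) ≤ G t - W t + W t / A * Cν := hle
    rw [mul_sub] at hle'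
    linarith
  -- integrate the Gibbs step
  have hgibbs2 : (∫ t, W t * log (W t) ∂μ₀) - A * log A ≤ (∫ t, G t ∂μ₀) - A + Cν := by
    have hL : Integrable (fun t => W t * log (W t) - W t * log A) μ₀ :=
      hΦWint.sub (hWint.mul_const (log A))
    have hR : Integrable (fun t => G t - W t + W t / A * Cν) μ₀ :=
      (hGint.sub hWint).add ((hWint.div_const A).mul_const Cν)
    have hs1 : Integrable (fun t => G t - W t) μ₀ := hGint.sub hWint
    have hs2 : Integrable (fun t => W t / A * Cν) μ₀ := (hWint.div_const A).mul_const Cν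
    have hle := integral_mono_ae hL hR hgibbs
    rw [integral_sub hΦWint (hWint.mul_const _), integral_mul_const,
      integral_add hs1 hs2,
      integral_sub hGint hWint, integral_mul_const, integral_div, ← hAW,
      div_self hApos.ne', one_mul] at hle
    linarith
  -- conditional-entropy bound
  have hmid : (∫ t, h t ∂μ₀) - (∫ t, W t * log (W t) ∂μ₀) ≤ ∫ t, B t ∂μ₀ := by
    have hL : Integrable (fun t => h t - W t * log (W t)) μ₀ := hhint.sub hΦWint
    have hle := integral_mono_ae hL hB hent
    rw [integral_sub hhint hΦWint] at hle
    exact hle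
  -- put everything together
  have e1 : ∫ p, Z p * log (Z p) ∂ρ = ∫ t, h t ∂μ₀ := integral_prod _ hZlog
  have e2 : ∫ p, Z p * log (Z p / c p.2) ∂ρ = ∫ t, G t ∂μ₀ := integral_prod _ hZlogc
  have i1 : Integrable (fun p : α × β => Z p - c p.2) ρ := hZint.sub hcint
  have e3 : ∫ p, (Z p * log (Z p / c p.2) - (Z p - c p.2)) ∂ρ
      = (∫ t, G t ∂μ₀) - (A - Cν) := by
    rw [integral_sub hZlogc i1, integral_sub hZint hcint, e2, hCρ, ← hA]
  rw [e1, e3]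
  linarith


section AuxMain

lemma aux_main : ∀ (n : ℕ) (μ : Fin n → Measure ℝ) (_hprob : ∀ i, IsProbabilityMeasure (μ i))
    (Z : (Fin n → ℝ) → ℝ) (Zi : Fin n → (Fin n → ℝ) → ℝ)
    (_hZmeas : Measurable Z) (_hZimeas : ∀ i, Measurable (Zi i))
    (_hZpos : ∀ x, 0 < Z x) (_hZipos : ∀ i x, 0 < Zi i x)
    (_hZint : Integrable Z (Measure.pi μ))
    (_hZiint : ∀ i, Integrable (Zi i) (Measure.pi μ))
    (_hZlogint : Integrable (fun x => Z x * Real.log (Z x)) (Measure.pi μ))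
    (_hZlogiint : ∀ i,
      Integrable (fun x => Z x * Real.log (Z x / Zi i x)) (Measure.pi μ))
    (_hZi_indep : ∀ i (x y : Fin n → ℝ), (∀ j, j ≠ i → x j = y j) → Zi i x = Zi i y),
    ∫ x, Z x * Real.log (Z x) ∂(Measure.pi μ)
        - (∫ x, Z x ∂(Measure.pi μ)) * Real.log (∫ x, Z x ∂(Measure.pi μ))
      ≤ ∑ i, ∫ x, (Z x * Real.log (Z x / Zi i x) - (Z x - Zi i x)) ∂(Measure.pi μ) := by
  intro n
  induction n with
  | zero =>
    intro μ hprob Z Zi hZmeas hZimeas hZpos hZipos hZint hZiint hZlogint hZlogiint hZi_indep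
    have hpi := Measure.pi_of_empty μ
    rw [hpi]
    have hm1 : StronglyMeasurable (fun x : Fin 0 → ℝ => Z x * Real.log (Z x)) :=
      (hZmeas.mul (Real.measurable_log.comp hZmeas)).stronglyMeasurable
    rw [integral_dirac' _ _ hm1, integral_dirac' _ _ hZmeas.stronglyMeasurable]
    simp
  | succ n ih =>
    intro μ hprob Z Zi hZmeas hZimeas hZpos hZipos hZint hZiint hZlogint hZlogiint hZi_indep
    haveI := hprob
    haveI : ∀ j : Fin n, IsProbabilityMeasure (μ ((0 : Fin (n+1)).succAbove j)) :=
      fun j => hprob _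
    set μ₀ := μ 0 with hμ₀
    set ν := Measure.pi (fun j : Fin n => μ ((0 : Fin (n+1)).succAbove j)) with hνdef
    haveI : IsProbabilityMeasure ν := by rw [hνdef]; infer_instance
    set e := MeasurableEquiv.piFinSuccAbove (fun _ : Fin (n+1) => ℝ) 0 with he
    have hmp : MeasurePreserving e (Measure.pi μ) (μ₀.prod ν) :=
      measurePreserving_piFinSuccAbove μ 0
    have hint : ∀ f : (Fin (n+1) → ℝ) → ℝ,
        ∫ p, f (e.symm p) ∂(μ₀.prod ν) = ∫ x, f x ∂(Measure.pi μ) := by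
      intro f
      rw [← hmp.map_eq, integral_map_equiv]
      simp only [MeasurableEquiv.symm_apply_apply]
    have hii : ∀ f : (Fin (n+1) → ℝ) → ℝ, Integrable f (Measure.pi μ) →
        Integrable (fun p => f (e.symm p)) (μ₀.prod ν) := by
      intro f hf
      have hfe : ((fun p => f (e.symm p)) ∘ ⇑e) = f := by
        funext x; simp
      rw [← hmp.map_eq, integrable_map_equiv, hfe]
      exact hf
    have hsymm0 : ∀ (t : ℝ) (y : Fin n → ℝ), e.symm (t, y) 0 = t := by
      intro t y
      simp [he, MeasurableEquiv.piFinSuccAbove_symm_apply]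
    have hsymmS : ∀ (t : ℝ) (y : Fin n → ℝ) (j : Fin n),
        e.symm (t, y) ((0 : Fin (n+1)).succAbove j) = y j := by
      intro t y j
      simp [he, MeasurableEquiv.piFinSuccAbove_symm_apply]
    -- the coordinate-0 replacement function
    have hc_eq : ∀ p : ℝ × (Fin n → ℝ), Zi 0 (e.symm p) = Zi 0 (e.symm (0, p.2)) := by
      rintro ⟨t, y⟩
      refine hZi_indep 0 _ _ fun j hj => ?_
      obtain ⟨k, rfl⟩ := Fin.exists_succAbove_eq hj
      rw [hsymmS, hsymmS]
    -- integrability of all RHS terms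
    have hRint : ∀ i : Fin (n+1),
        Integrable (fun x => Z x * Real.log (Z x / Zi i x) - (Z x - Zi i x)) (Measure.pi μ) :=
      fun i => (hZlogiint i).sub (hZint.sub (hZiint i))
    have hRint' : ∀ i : Fin (n+1), Integrable (fun p =>
        Z (e.symm p) * Real.log (Z (e.symm p) / Zi i (e.symm p))
          - (Z (e.symm p) - Zi i (e.symm p))) (μ₀.prod ν) :=
      fun i => hii _ (hRint i)
    -- a.e. section integrability
    have hsec1 := (hii Z hZint).prod_right_ae
    have hsec2 := (hii _ hZlogint).prod_right_ae
    have hsec3 : ∀ᵐ t ∂μ₀, ∀ i : Fin n,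
        Integrable (fun y => Zi ((0 : Fin (n+1)).succAbove i) (e.symm (t, y))) ν :=
      ae_all_iff.2 fun i => (hii _ (hZiint _)).prod_right_ae
    have hsec4 : ∀ᵐ t ∂μ₀, ∀ i : Fin n,
        Integrable (fun y => Z (e.symm (t, y)) *
          Real.log (Z (e.symm (t, y)) / Zi ((0 : Fin (n+1)).succAbove i) (e.symm (t, y)))) ν :=
      ae_all_iff.2 fun i => (hii _ (hZlogiint _)).prod_right_ae
    -- the conditional entropy bound from the induction hypothesis
    have hent : ∀ᵐ t ∂μ₀,
        (∫ y, Z (e.symm (t, y)) * Real.log (Z (e.symm (t, y))) ∂ν)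
          - (∫ y, Z (e.symm (t, y)) ∂ν) * Real.log (∫ y, Z (e.symm (t, y)) ∂ν)
        ≤ ∑ i : Fin n, ∫ y, (Z (e.symm (t, y)) *
            Real.log (Z (e.symm (t, y)) / Zi ((0 : Fin (n+1)).succAbove i) (e.symm (t, y)))
            - (Z (e.symm (t, y)) - Zi ((0 : Fin (n+1)).succAbove i) (e.symm (t, y)))) ∂ν := by
      filter_upwards [hsec1, hsec2, hsec3, hsec4] with t h1 h2 h3 h4
      have hind : ∀ (i : Fin n) (x y : Fin n → ℝ), (∀ j, j ≠ i → x j = y j) →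
          Zi ((0 : Fin (n+1)).succAbove i) (e.symm (t, x))
            = Zi ((0 : Fin (n+1)).succAbove i) (e.symm (t, y)) := by
        intro i x y hxy
        refine hZi_indep _ _ _ fun j hj => ?_
        rcases eq_or_ne j 0 with rfl | hj0
        · rw [hsymm0, hsymm0]
        · obtain ⟨k, rfl⟩ := Fin.exists_succAbove_eq hj0
          rw [hsymmS, hsymmS]
          exact hxy k fun hk => hj (by rw [hk])
      exact ih (fun j => μ ((0 : Fin (n+1)).succAbove j)) (fun j => hprob _)
        (fun y => Z (e.symm (t, y)))
        (fun i y => Zi ((0 : Fin (n+1)).succAbove i) (e.symm (t, y)))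
        (hZmeas.comp (e.symm.measurable.comp measurable_prodMk_left))
        (fun i => (hZimeas _).comp (e.symm.measurable.comp measurable_prodMk_left))
        (fun y => hZpos _) (fun i y => hZipos _ _)
        h1 h3 h2 h4 hind
    -- apply the key lemma
    have hBint : Integrable (fun t => ∑ i : Fin n, ∫ y, (Z (e.symm (t, y)) *
          Real.log (Z (e.symm (t, y)) / Zi ((0 : Fin (n+1)).succAbove i) (e.symm (t, y)))
          - (Z (e.symm (t, y)) - Zi ((0 : Fin (n+1)).succAbove i) (e.symm (t, y)))) ∂ν) μ₀ :=
      integrable_finset_sum _ fun i _ => (hRint' _).integral_prod_left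
    have hcint' : Integrable (fun p : ℝ × (Fin n → ℝ) => Zi 0 (e.symm (0, p.2))) (μ₀.prod ν) :=
      (hii _ (hZiint 0)).congr (Filter.Eventually.of_forall fun p => hc_eq p)
    have hZlogc' : Integrable (fun p : ℝ × (Fin n → ℝ) =>
        Z (e.symm p) * Real.log (Z (e.symm p) / Zi 0 (e.symm (0, p.2)))) (μ₀.prod ν) :=
      (hii _ (hZlogiint 0)).congr (Filter.Eventually.of_forall fun p => by
        show Z (e.symm p) * Real.log (Z (e.symm p) / Zi 0 (e.symm p))
          = Z (e.symm p) * Real.log (Z (e.symm p) / Zi 0 (e.symm (0, p.2)))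
        rw [hc_eq p])
    have hkey := aux_key μ₀ ν (fun p => Z (e.symm p))
      (hZmeas.comp e.symm.measurable) (fun p => hZpos _)
      (hii Z hZint) (hii _ hZlogint)
      (fun y => Zi 0 (e.symm (0, y))) (fun y => hZipos 0 _)
      hcint' hZlogc'
      (fun t => ∑ i : Fin n, ∫ y, (Z (e.symm (t, y)) *
          Real.log (Z (e.symm (t, y)) / Zi ((0 : Fin (n+1)).succAbove i) (e.symm (t, y)))
          - (Z (e.symm (t, y)) - Zi ((0 : Fin (n+1)).succAbove i) (e.symm (t, y)))) ∂ν)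
      hBint hent
    -- transfer back to the pi measure
    have e1 : ∫ p, Z (e.symm p) * Real.log (Z (e.symm p)) ∂(μ₀.prod ν)
        = ∫ x, Z x * Real.log (Z x) ∂(Measure.pi μ) := hint (fun x => Z x * Real.log (Z x))
    have e2 : ∫ p, Z (e.symm p) ∂(μ₀.prod ν) = ∫ x, Z x ∂(Measure.pi μ) := hint Z
    have eB : ∫ t, (∑ i : Fin n, ∫ y, (Z (e.symm (t, y)) *
          Real.log (Z (e.symm (t, y)) / Zi ((0 : Fin (n+1)).succAbove i) (e.symm (t, y)))
          - (Z (e.symm (t, y)) - Zi ((0 : Fin (n+1)).succAbove i) (e.symm (t, y)))) ∂ν) ∂μ₀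
        = ∑ i : Fin n, ∫ x, (Z x * Real.log (Z x / Zi ((0 : Fin (n+1)).succAbove i) x)
            - (Z x - Zi ((0 : Fin (n+1)).succAbove i) x)) ∂(Measure.pi μ) := by
      rw [integral_finset_sum _ fun i _ => (hRint' _).integral_prod_left]
      exact Finset.sum_congr rfl fun i _ =>
        (integral_prod _ (hRint' ((0 : Fin (n+1)).succAbove i))).symm.trans
          (hint (fun x => Z x * Real.log (Z x / Zi ((0 : Fin (n+1)).succAbove i) x)
            - (Z x - Zi ((0 : Fin (n+1)).succAbove i) x)))
    have elast : ∫ p, (Z (e.symm p) * Real.log (Z (e.symm p) / Zi 0 (e.symm (0, p.2)))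
          - (Z (e.symm p) - Zi 0 (e.symm (0, p.2)))) ∂(μ₀.prod ν)
        = ∫ x, (Z x * Real.log (Z x / Zi 0 x) - (Z x - Zi 0 x)) ∂(Measure.pi μ) := by
      refine (integral_congr_ae (Filter.Eventually.of_forall fun p => ?_)).trans
        (hint (fun x => Z x * Real.log (Z x / Zi 0 x) - (Z x - Zi 0 x)))
      show (Z (e.symm p) * Real.log (Z (e.symm p) / Zi 0 (e.symm (0, p.2)))
          - (Z (e.symm p) - Zi 0 (e.symm (0, p.2))))
        = (Z (e.symm p) * Real.log (Z (e.symm p) / Zi 0 (e.symm p))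
          - (Z (e.symm p) - Zi 0 (e.symm p)))
      rw [← hc_eq p]
    rw [e1, e2, eB, elast] at hkey
    rw [Fin.sum_univ_succAbove (fun i => ∫ x,
      (Z x * Real.log (Z x / Zi i x) - (Z x - Zi i x)) ∂(Measure.pi μ)) 0]
    linarith
end AuxMain

/-- **sub-additivity of entropy.** Let `X_1, …, X_n` be independent random
variables (modelled by a product probability measure on `Fin n → ℝ`), let
`Z` be a positive function of `(X_1, …, X_n)`, and for each `i` let `Z_i` be a positive
function not depending on the `i`-th coordinate (all integrable enough). Then
`E[Z ln Z] - E[Z] ln (E[Z]) ≤ ∑_i E[Z ln (Z / Z_i) - (Z - Z_i)]`. -/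
theorem stmt12 (n : ℕ) (μ : Fin n → Measure ℝ) [∀ i, IsProbabilityMeasure (μ i)]
    (Z : (Fin n → ℝ) → ℝ) (Zi : Fin n → (Fin n → ℝ) → ℝ)
    (hZmeas : Measurable Z) (hZimeas : ∀ i, Measurable (Zi i))
    (hZpos : ∀ x, 0 < Z x) (hZipos : ∀ i x, 0 < Zi i x)
    (hZint : Integrable Z (Measure.pi μ))
    (hZiint : ∀ i, Integrable (Zi i) (Measure.pi μ))
    (hZlogint : Integrable (fun x => Z x * Real.log (Z x)) (Measure.pi μ))
    (hZlogiint : ∀ i,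
      Integrable (fun x => Z x * Real.log (Z x / Zi i x)) (Measure.pi μ))
    (hZi_indep : ∀ i (x y : Fin n → ℝ), (∀ j, j ≠ i → x j = y j) → Zi i x = Zi i y) :
    ∫ x, Z x * Real.log (Z x) ∂(Measure.pi μ)
        - (∫ x, Z x ∂(Measure.pi μ)) * Real.log (∫ x, Z x ∂(Measure.pi μ))
      ≤ ∑ i, ∫ x, (Z x * Real.log (Z x / Zi i x) - (Z x - Zi i x)) ∂(Measure.pi μ) :=
  aux_main n μ inferInstance Z Zi hZmeas hZimeas hZpos hZipos hZint hZiint hZlogint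
    hZlogiint hZi_indep
end
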